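/- arXiv:2603.21375 — 10 statements merged into one kernel-verified Lean document; each statement's English description precedes it below -/
import Mathlib

section
/- Regret decomposition for the penalty surrogate: for every index 1 ≤ s ≤ T and every comparator u ∈ X satisfying ĝ_t(u) ≤ 0 for all t ∈ {s,…,T}, one has Σ_{t=s}^T (f̂_t(x_t) − f̂_t(u)) + Φ(V̂_T) − Φ(V̂_{s−1}) ≤ Σ_{t=s}^T (L̂_t(x_t) − L̂_t(u)). -/
/-- Tangent-line inequality for a convex differentiable function on `Ici 0`. -/
lemma tangent_ineq {Φ Φ' : ℝ → ℝ} (hΦconv : ConvexOn ℝ (Set.Ici 0) Φ)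
    (hΦderiv : ∀ v ∈ Set.Ici (0:ℝ), HasDerivAt Φ (Φ' v) v)
    {a b : ℝ} (ha : 0 ≤ a) (hab : a ≤ b) :
    Φ b - Φ a ≤ Φ' b * (b - a) := by
  rcases eq_or_lt_of_le hab with h | h
  · simp [h]
  · have hb : (0:ℝ) ≤ b := ha.trans hab
    have := hΦconv.slope_le_of_hasDerivAt (x := a) (y := b) ha hb h (hΦderiv b hb)
    rw [slope_def_field] at this
    have hba : 0 < b - a := sub_pos.mpr h
    calc Φ b - Φ a = (Φ b - Φ a) / (b - a) * (b - a) := by field_simp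
    _ ≤ Φ' b * (b - a) := by
        apply mul_le_mul_of_nonneg_right _ hba.le
        simpa [div_eq_div_iff] using this

/-- Regret decomposition for the penalty surrogate: for every
`1 ≤ s ≤ T` and every comparator `u ∈ X` feasible on `{s,…,T}`,
`Σ_{t=s}^T (f̂_t(x_t) − f̂_t(u)) + Φ(V̂_T) − Φ(V̂_{s−1})
  ≤ Σ_{t=s}^T (L̂_t(x_t) − L̂_t(u))`. -/
theorem penalty_surrogate_regret_decomposition
    (d T : ℕ) (hd : 0 < d) (hT : 0 < T)
    (X : Set (EuclideanSpace ℝ (Fin d)))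
    (hXne : X.Nonempty) (hXcpt : IsCompact X) (hXconv : Convex ℝ X)
    (f g : ℕ → EuclideanSpace ℝ (Fin d) → ℝ)
    (hfconv : ∀ t ∈ Finset.Icc 1 T, ConvexOn ℝ Set.univ (f t))
    (hgconv : ∀ t ∈ Finset.Icc 1 T, ConvexOn ℝ Set.univ (g t))
    (Φ Φ' : ℝ → ℝ)
    (hΦconv : ConvexOn ℝ (Set.Ici 0) Φ)
    (hΦmono : MonotoneOn Φ (Set.Ici 0))
    (hΦderiv : ∀ v ∈ Set.Ici (0:ℝ), HasDerivAt Φ (Φ' v) v)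
    (hΦ'nonneg : ∀ v ∈ Set.Ici (0:ℝ), 0 ≤ Φ' v)
    (hΦ0 : Φ 0 = 0)
    (hΦnonneg : ∀ v ∈ Set.Ici (0:ℝ), 0 ≤ Φ v)
    -- arbitrary decisions
    (x : ℕ → EuclideanSpace ℝ (Fin d))
    (hx : ∀ t ∈ Finset.Icc 1 T, x t ∈ X)
    -- cumulative violation and surrogate losses
    (V : ℕ → ℝ)
    (hV : ∀ t, V t = ∑ τ ∈ Finset.Icc 1 t, max (g τ (x τ)) 0)
    (L : ℕ → EuclideanSpace ℝ (Fin d) → ℝ)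
    (hL : ∀ t y, L t y = f t y + Φ' (V t) * max (g t y) 0)
    -- index s and comparator
    (s : ℕ) (hs1 : 1 ≤ s) (hsT : s ≤ T)
    (u : EuclideanSpace ℝ (Fin d)) (hu : u ∈ X)
    (hufeas : ∀ t ∈ Finset.Icc s T, g t u ≤ 0) :
    ∑ t ∈ Finset.Icc s T, (f t (x t) - f t u) + Φ (V T) - Φ (V (s - 1))
      ≤ ∑ t ∈ Finset.Icc s T, (L t (x t) - L t u) := by
  -- V is nonnegative
  have hVnonneg : ∀ t, 0 ≤ V t := by
    intro t
    rw [hV t]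
    exact Finset.sum_nonneg fun τ _ => le_max_right _ _
  -- V t = V (t-1) + max for t ≥ 1
  have hVstep : ∀ t, 1 ≤ t → V t = V (t - 1) + max (g t (x t)) 0 := by
    intro t ht
    obtain ⟨n, rfl⟩ : ∃ n, t = n + 1 := ⟨t - 1, by omega⟩
    rw [hV, hV]
    simp only [Nat.add_sub_cancel]
    exact Finset.sum_Icc_succ_top (by omega) _
  -- RHS sum simplification: for t in [s,T], L t u = f t u
  have hLu : ∀ t ∈ Finset.Icc s T, L t u = f t u := by
    intro t ht
    rw [hL]
    have : max (g t u) 0 = 0 := max_eq_right (hufeas t ht)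
    rw [this]; ring
  have hrewrite : ∑ t ∈ Finset.Icc s T, (L t (x t) - L t u)
      = ∑ t ∈ Finset.Icc s T, (f t (x t) - f t u)
        + ∑ t ∈ Finset.Icc s T, Φ' (V t) * max (g t (x t)) 0 := by
    rw [← Finset.sum_add_distrib]
    apply Finset.sum_congr rfl
    intro t ht
    rw [hLu t ht, hL]; ring
  rw [hrewrite]
  -- reduces to Φ (V T) - Φ (V (s-1)) ≤ Σ Φ'(V t) * max ...
  have key : ∀ N, s - 1 ≤ N →
      Φ (V N) - Φ (V (s - 1)) ≤ ∑ t ∈ Finset.Icc s N, Φ' (V t) * max (g t (x t)) 0 := by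
    intro N hN
    induction N with
    | zero =>
      have hs : s = 1 := by omega
      subst hs
      simp
    | succ n ih =>
      rcases Nat.lt_or_ge n (s - 1) with h | h
      · have h1 : s - 1 = n + 1 := by omega
        have h2 : Finset.Icc s (n+1) = ∅ := Finset.Icc_eq_empty (by omega)
        rw [h1, h2]
        simp
      · have hs_le : s ≤ n + 1 := by omega
        rw [Finset.sum_Icc_succ_top hs_le]
        have hstep : Φ (V (n+1)) - Φ (V n) ≤ Φ' (V (n+1)) * max (g (n+1) (x (n+1))) 0 := by
          have h1 : V (n+1) = V n + max (g (n+1) (x (n+1))) 0 := by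
            have := hVstep (n+1) (by omega)
            simpa using this
          have := tangent_ineq (a := V n) (b := V (n+1)) hΦconv hΦderiv (hVnonneg n)
            (by rw [h1]; exact le_add_of_nonneg_right (le_max_right _ _))
          calc Φ (V (n+1)) - Φ (V n) ≤ Φ' (V (n+1)) * (V (n+1) - V n) := this
          _ = Φ' (V (n+1)) * max (g (n+1) (x (n+1))) 0 := by rw [h1]; ring_nf
        linarith [ih h]
  linarith [key T (by omega)]
end

section
/- With the quadratic penalty Φ(v) := v²/√T, the adaptive OGD iterates satisfy the explicit regret bound: for every u ∈ X with ĝ_t(u) ≤ 0 for all t ∈ {1,…,T}, Σ_{t=1}^T f̂_t(x_t) − Σ_{t=1}^T f̂_t(u) ≤ √2·D + √(2T)·D·L_f + 2·√T·D²·L_g². -/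
lemma ogd_aux_telescope (B b : ℕ → ℝ) (M : ℝ)
    (hBM : ∀ t, B t ≤ M) (hb0 : ∀ t, 0 ≤ b t) (hbmono : ∀ t, b t ≤ b (t+1)) :
    ∀ n, ∑ t ∈ Finset.Icc 1 n, (B t - B (t+1)) * b t ≤ (M - B (n+1)) * b n := by
  intro n
  induction n with
  | zero =>
      simp only [show Finset.Icc 1 0 = (∅ : Finset ℕ) by rfl, Finset.sum_empty]
      exact mul_nonneg (sub_nonneg.2 (hBM 1)) (hb0 0)
  | succ n ih =>
      rw [Finset.sum_Icc_succ_top (by omega : 1 ≤ n + 1)]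
      nlinarith [mul_nonneg (sub_nonneg.2 (hBM (n+1))) (sub_nonneg.2 (hbmono n))]

lemma ogd_aux_div_sqrt (a : ℕ → ℝ) (ha : ∀ t, 0 ≤ a t) (δ : ℕ → ℝ)
    (hδ : ∀ t, δ t = 1 + ∑ τ ∈ Finset.Icc 1 t, a τ) :
    ∀ n, ∑ t ∈ Finset.Icc 1 n, a t / Real.sqrt (δ t)
      ≤ 2 * Real.sqrt (δ n) - 2 * Real.sqrt (δ 0) := by
  have hδ1 : ∀ t, 1 ≤ δ t := by
    intro t; rw [hδ]
    have := Finset.sum_nonneg (fun τ (_ : τ ∈ Finset.Icc 1 t) => ha τ)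
    linarith
  have hδmono : ∀ t, δ t ≤ δ (t+1) := by
    intro t; rw [hδ, hδ, Finset.sum_Icc_succ_top (by omega : 1 ≤ t + 1)]
    linarith [ha (t+1)]
  intro n
  induction n with
  | zero =>
      simp only [show Finset.Icc 1 0 = (∅ : Finset ℕ) by rfl, Finset.sum_empty]
      linarith
  | succ n ih =>
      rw [Finset.sum_Icc_succ_top (by omega : 1 ≤ n + 1)]
      have hs : 0 < Real.sqrt (δ (n+1)) := Real.sqrt_pos.2 (by linarith [hδ1 (n+1)])
      have hr : 0 < Real.sqrt (δ n) := Real.sqrt_pos.2 (by linarith [hδ1 n])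
      have hrs : Real.sqrt (δ n) ≤ Real.sqrt (δ (n+1)) := Real.sqrt_le_sqrt (hδmono n)
      have hsq : Real.sqrt (δ (n+1)) ^ 2 = δ (n+1) := Real.sq_sqrt (by linarith [hδ1 (n+1)])
      have hrq : Real.sqrt (δ n) ^ 2 = δ n := Real.sq_sqrt (by linarith [hδ1 n])
      have hval : a (n+1) = δ (n+1) - δ n := by
        rw [hδ, hδ, Finset.sum_Icc_succ_top (by omega : 1 ≤ n + 1)]; ring
      have hkey : a (n+1) / Real.sqrt (δ (n+1))
          ≤ 2 * Real.sqrt (δ (n+1)) - 2 * Real.sqrt (δ n) := by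
        rw [div_le_iff₀ hs, hval]
        nlinarith [sq_nonneg (Real.sqrt (δ (n+1)) - Real.sqrt (δ n))]
      linarith

lemma ogd_proj_lemma {E : Type*} [NormedAddCommGroup E] [InnerProductSpace ℝ E]
    {X : Set E} (hX : Convex ℝ X) {p q w : E} (hq : q ∈ X) (hw : w ∈ X)
    (hmin : ∀ y ∈ X, ‖q - p‖ ≤ ‖y - p‖) : ‖q - w‖ ≤ ‖p - w‖ := by
  have hne : Nonempty X := ⟨⟨q, hq⟩⟩
  have heq : ‖p - q‖ = ⨅ y : X, ‖p - (y : E)‖ := by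
    apply le_antisymm
    · exact le_ciInf fun y => by
        rw [norm_sub_rev, norm_sub_rev p]
        exact hmin y y.2
    · have hbdd : BddBelow (Set.range fun y : X => ‖p - (y : E)‖) :=
        ⟨0, by rintro z ⟨y, rfl⟩; exact norm_nonneg _⟩
      exact ciInf_le hbdd ⟨q, hq⟩
  have hob := (norm_eq_iInf_iff_real_inner_le_zero hX hq).mp heq
  have h1 : (inner ℝ (p - q) (w - q) : ℝ) ≤ 0 := hob w hw
  have h2 := norm_sub_sq_real (p - q) (w - q)
  rw [sub_sub_sub_cancel_right] at h2
  have h3 : ‖q - w‖ ^ 2 ≤ ‖p - w‖ ^ 2 := by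
    rw [norm_sub_rev q w]
    nlinarith [sq_nonneg ‖p - q‖]
  nlinarith [norm_nonneg (q - w), norm_nonneg (p - w)]

lemma ogd_aux_e (D s2 sδ : ℝ) (hD : D ≠ 0) (h2 : s2 ≠ 0) (h22 : s2 * s2 = 2) :
    D ^ 2 * (s2 * sδ / (2 * D)) + D / (2 * s2) * (2 * sδ) = s2 * D * sδ := by
  field_simp
  linear_combination (-sδ) * h22



set_option maxHeartbeats 2000000 in
/-- With the quadratic penalty `Φ(v) = v²/√T` (so `Φ′(v) = 2v/√T`),
adaptive OGD satisfies, for every feasible comparator `u`,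
`Σ f̂_t(x_t) − Σ f̂_t(u) ≤ √2·D + √(2T)·D·L_f + 2·√T·D²·L_g²`. -/
theorem quadratic_penalty_ogd_regret
    (d T : ℕ) (hd : 0 < d) (hT : 0 < T)
    (X : Set (EuclideanSpace ℝ (Fin d)))
    (hXne : X.Nonempty) (hXcpt : IsCompact X) (hXconv : Convex ℝ X)
    (D : ℝ) (hD : D = Metric.diam X)
    (Lf Lg : ℝ)
    (f g : ℕ → EuclideanSpace ℝ (Fin d) → ℝ)
    (hfconv : ∀ t ∈ Finset.Icc 1 T, ConvexOn ℝ Set.univ (f t))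
    (hgconv : ∀ t ∈ Finset.Icc 1 T, ConvexOn ℝ Set.univ (g t))
    (hfLip : ∀ t ∈ Finset.Icc 1 T, ∀ x y, |f t x - f t y| ≤ Lf * ‖x - y‖)
    (hgLip : ∀ t ∈ Finset.Icc 1 T, ∀ x y, |g t x - g t y| ≤ Lg * ‖x - y‖)
    -- decisions and subgradients
    (x u : ℕ → EuclideanSpace ℝ (Fin d))
    (hx : ∀ t ∈ Finset.Icc 1 T, x t ∈ X)
    -- cumulative violation and surrogate losses with quadratic penalty
    (V : ℕ → ℝ)
    (hV : ∀ t, V t = ∑ τ ∈ Finset.Icc 1 t, max (g τ (x τ)) 0)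
    (L : ℕ → EuclideanSpace ℝ (Fin d) → ℝ)
    (hL : ∀ t y, L t y = f t y + (2 * V t / Real.sqrt T) * max (g t y) 0)
    -- u t is a subgradient of L t at x t
    (hsub : ∀ t ∈ Finset.Icc 1 T, ∀ y,
      L t y ≥ L t (x t) + (inner ℝ (u t) (y - x t) : ℝ))
    -- step sizes
    (δ η : ℕ → ℝ)
    (hδ : ∀ t, δ t = 1 + ∑ τ ∈ Finset.Icc 1 t, ‖u τ‖ ^ 2)
    (hη : ∀ t, η t = D / (Real.sqrt 2 * Real.sqrt (δ t)))
    -- projected gradient update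
    (hupdate : ∀ t ∈ Finset.Icc 1 (T - 1), ∀ y ∈ X,
      ‖x (t+1) - (x t - η t • u t)‖ ≤ ‖y - (x t - η t • u t)‖)
    -- feasible comparator
    (v : EuclideanSpace ℝ (Fin d)) (hv : v ∈ X)
    (hvfeas : ∀ t ∈ Finset.Icc 1 T, g t v ≤ 0) :
    ∑ t ∈ Finset.Icc 1 T, f t (x t) - ∑ t ∈ Finset.Icc 1 T, f t v
      ≤ Real.sqrt 2 * D + Real.sqrt (2 * T) * D * Lf
          + 2 * Real.sqrt T * D ^ 2 * Lg ^ 2 := by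
  -- basic positivity facts
  have hT1 : (1:ℕ) ∈ Finset.Icc 1 T := Finset.mem_Icc.mpr ⟨le_refl 1, hT⟩
  have hTpos : (0:ℝ) < T := by exact_mod_cast hT
  have hsT : 0 < Real.sqrt T := Real.sqrt_pos.2 hTpos
  have hs2 : 0 < Real.sqrt 2 := by positivity
  have h22 : Real.sqrt 2 * Real.sqrt 2 = 2 := Real.mul_self_sqrt (by norm_num)
  have hTT : Real.sqrt T * Real.sqrt T = (T:ℝ) := Real.mul_self_sqrt hTpos.le
  -- Lf and Lg are nonnegative
  have hpt : ‖(EuclideanSpace.single (⟨0, hd⟩ : Fin d) (1:ℝ)) - 0‖ = 1 := by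
    rw [sub_zero, EuclideanSpace.norm_single]; norm_num
  have hLf0 : 0 ≤ Lf := by
    have h := hfLip 1 hT1 (EuclideanSpace.single (⟨0, hd⟩ : Fin d) (1:ℝ)) 0
    rw [hpt, mul_one] at h
    exact le_trans (abs_nonneg _) h
  have hLg0 : 0 ≤ Lg := by
    have h := hgLip 1 hT1 (EuclideanSpace.single (⟨0, hd⟩ : Fin d) (1:ℝ)) 0
    rw [hpt, mul_one] at h
    exact le_trans (abs_nonneg _) h
  -- facts about V
  have hV0 : V 0 = 0 := by rw [hV]; rfl
  have hVnn : ∀ n, 0 ≤ V n := fun n => by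
    rw [hV]; exact Finset.sum_nonneg fun τ _ => le_max_right _ _
  have hVrec : ∀ n, V (n+1) = V n + max (g (n+1) (x (n+1))) 0 := fun n => by
    rw [hV, hV, Finset.sum_Icc_succ_top (by omega : 1 ≤ n + 1)]
  have hVmono : ∀ t, t ≤ T → V t ≤ V T := fun t ht => by
    rw [hV, hV]
    exact Finset.sum_le_sum_of_subset_of_nonneg
      (Finset.Icc_subset_Icc_right ht) (fun τ _ _ => le_max_right _ _)
  -- facts about δ
  have hδ1 : ∀ t, 1 ≤ δ t := fun t => by
    rw [hδ]
    have := Finset.sum_nonneg (fun τ (_ : τ ∈ Finset.Icc 1 t) => sq_nonneg ‖u τ‖)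
    linarith
  have hsδpos : ∀ t, 0 < Real.sqrt (δ t) := fun t => Real.sqrt_pos.2 (by linarith [hδ1 t])
  have hδmono : ∀ t, δ t ≤ δ (t+1) := fun t => by
    rw [hδ, hδ, Finset.sum_Icc_succ_top (by omega : 1 ≤ t + 1)]
    linarith [sq_nonneg ‖u (t+1)‖]
  -- nonnegativity of the penalty coefficient
  have hcnn : ∀ t, 0 ≤ 2 * V t / Real.sqrt T := fun t =>
    div_nonneg (by linarith [hVnn t]) hsT.le
  -- subgradient norm bound
  have hub : ∀ t ∈ Finset.Icc 1 T, ‖u t‖ ≤ Lf + (2 * V t / Real.sqrt T) * Lg := by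
    intro t ht
    have h1 := hsub t ht (x t + u t)
    rw [add_sub_cancel_left, real_inner_self_eq_norm_sq, hL, hL] at h1
    have hfl := hfLip t ht (x t + u t) (x t)
    have hgl := hgLip t ht (x t + u t) (x t)
    rw [add_sub_cancel_left] at hfl hgl
    have hmax : |max (g t (x t + u t)) 0 - max (g t (x t)) 0|
        ≤ |g t (x t + u t) - g t (x t)| := abs_max_sub_max_le_abs _ _ _
    have hc := hcnn t
    have e1 : f t (x t + u t) - f t (x t) ≤ Lf * ‖u t‖ := le_trans (le_abs_self _) hfl
    have e2 : max (g t (x t + u t)) 0 - max (g t (x t)) 0 ≤ Lg * ‖u t‖ :=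
      le_trans (le_abs_self _) (le_trans hmax hgl)
    have key : ‖u t‖ ^ 2 ≤ (Lf + (2 * V t / Real.sqrt T) * Lg) * ‖u t‖ := by
      nlinarith [mul_le_mul_of_nonneg_left e2 hc]
    have hKnn : 0 ≤ Lf + (2 * V t / Real.sqrt T) * Lg :=
      add_nonneg hLf0 (mul_nonneg hc hLg0)
    rcases eq_or_lt_of_le (norm_nonneg (u t)) with h0 | h0
    · rw [← h0]; exact hKnn
    · have : ‖u t‖ * ‖u t‖ ≤ (Lf + (2 * V t / Real.sqrt T) * Lg) * ‖u t‖ := by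
        nlinarith [key]
      exact le_of_mul_le_mul_right this h0
  -- penalty sum lower bound
  have hpen0 : ∀ n, V n ^ 2 ≤ ∑ t ∈ Finset.Icc 1 n, 2 * V t * max (g t (x t)) 0 := by
    intro n
    induction n with
    | zero => simp [hV0]
    | succ n ih =>
        rw [Finset.sum_Icc_succ_top (by omega : 1 ≤ n + 1)]
        have hm : max (g (n+1) (x (n+1))) 0 = V (n+1) - V n := by linarith [hVrec n]
        rw [hm]
        nlinarith [ih, sq_nonneg (V (n+1) - V n)]
  have hpen : V T ^ 2 / Real.sqrt T
      ≤ ∑ t ∈ Finset.Icc 1 T, (2 * V t / Real.sqrt T) * max (g t (x t)) 0 := by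
    have e : ∀ t ∈ Finset.Icc 1 T, (2 * V t / Real.sqrt T) * max (g t (x t)) 0
        = (2 * V t * max (g t (x t)) 0) / Real.sqrt T := fun t _ => by ring
    rw [Finset.sum_congr rfl e, ← Finset.sum_div]
    gcongr
    exact hpen0 T
  -- relating surrogate losses to inner products
  have hLdiff : ∀ t ∈ Finset.Icc 1 T,
      (f t (x t) - f t v) + (2 * V t / Real.sqrt T) * max (g t (x t)) 0
        ≤ (inner ℝ (u t) (x t - v) : ℝ) := by
    intro t ht
    have h1 := hsub t ht v
    have h2 : (inner ℝ (u t) (v - x t) : ℝ) = -(inner ℝ (u t) (x t - v) : ℝ) := by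
      rw [← inner_neg_right, neg_sub]
    have h3 : max (g t v) 0 = 0 := max_eq_right (hvfeas t ht)
    rw [hL, hL, h3, mul_zero, add_zero, h2] at h1
    linarith
  -- diameter bound and case split on D
  have hD0 : 0 ≤ D := hD ▸ Metric.diam_nonneg
  rcases eq_or_lt_of_le hD0 with hD0' | hDpos
  · -- degenerate case D = 0
    have hxv : ∀ t ∈ Finset.Icc 1 T, x t = v := by
      intro t ht
      have h1 : dist (x t) v ≤ Metric.diam X :=
        Metric.dist_le_diam_of_mem hXcpt.isBounded (hx t ht) hv
      rw [← hD, ← hD0'] at h1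
      exact dist_le_zero.mp h1
    have heqs : ∑ t ∈ Finset.Icc 1 T, f t (x t) = ∑ t ∈ Finset.Icc 1 T, f t v :=
      Finset.sum_congr rfl (fun t ht => by rw [hxv t ht])
    rw [heqs, sub_self, ← hD0']
    norm_num
  · -- main case 0 < D
    have hDne : D ≠ 0 := ne_of_gt hDpos
    have hηpos : ∀ t, 0 < η t := fun t => by
      rw [hη]; exact div_pos hDpos (mul_pos hs2 (hsδpos t))
    -- distances are bounded by the diameter
    have hdist : ∀ t ∈ Finset.Icc 1 T, ‖x t - v‖ ≤ D := by
      intro t ht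
      have h1 : dist (x t) v ≤ Metric.diam X :=
        Metric.dist_le_diam_of_mem hXcpt.isBounded (hx t ht) hv
      rw [← hD, dist_eq_norm] at h1
      exact h1
    -- auxiliary sequences
    obtain ⟨B, hBdef⟩ : ∃ B : ℕ → ℝ,
        ∀ t, B t = if 1 ≤ t ∧ t ≤ T then ‖x t - v‖ ^ 2 else 0 := ⟨_, fun t => rfl⟩
    obtain ⟨b, hbdef⟩ : ∃ b : ℕ → ℝ,
        ∀ t, b t = Real.sqrt 2 * Real.sqrt (δ t) / (2 * D) := ⟨_, fun t => rfl⟩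
    have hBM : ∀ t, B t ≤ D ^ 2 := by
      intro t; rw [hBdef]
      split_ifs with h
      · exact pow_le_pow_left₀ (norm_nonneg _) (hdist t (Finset.mem_Icc.mpr ⟨h.1, h.2⟩)) 2
      · positivity
    have hbnn : ∀ t, 0 ≤ b t := fun t => by rw [hbdef]; positivity
    have hbmono : ∀ t, b t ≤ b (t+1) := fun t => by
      rw [hbdef, hbdef]
      gcongr
      exact hδmono t
    have hbη : ∀ t, b t * (2 * η t) = 1 := by
      intro t
      rw [hbdef, hη]
      field_simp
      exact div_self (hsδpos t).ne'
    -- per-step inequality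
    have hstep : ∀ t ∈ Finset.Icc 1 T,
        (inner ℝ (u t) (x t - v) : ℝ) ≤ (B t - B (t+1)) * b t + η t * ‖u t‖ ^ 2 / 2 := by
      intro t ht
      obtain ⟨ht1, ht2⟩ := Finset.mem_Icc.mp ht
      have hBt : B t = ‖x t - v‖ ^ 2 := by rw [hBdef, if_pos ⟨ht1, ht2⟩]
      have hsq : B (t+1) ≤ ‖(x t - v) - η t • u t‖ ^ 2 := by
        rcases eq_or_lt_of_le ht2 with hEq | hlt
        · rw [hBdef, if_neg (by omega)]
          positivity
        · rw [hBdef, if_pos ⟨by omega, by omega⟩]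
          have hup := hupdate t (Finset.mem_Icc.mpr ⟨ht1, by omega⟩)
          have hproj : ‖x (t+1) - v‖ ≤ ‖(x t - η t • u t) - v‖ :=
            ogd_proj_lemma hXconv (hx (t+1) (Finset.mem_Icc.mpr ⟨by omega, by omega⟩)) hv
              (fun y hy => hup y hy)
          have h2 := pow_le_pow_left₀ (norm_nonneg _) hproj 2
          rw [sub_right_comm] at h2
          exact h2
      set I : ℝ := (inner ℝ (u t) (x t - v) : ℝ) with hIdef
      have hexp : ‖(x t - v) - η t • u t‖ ^ 2
          = ‖x t - v‖ ^ 2 - 2 * (η t * I)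
            + η t ^ 2 * ‖u t‖ ^ 2 := by
        rw [hIdef, norm_sub_sq_real, real_inner_smul_right, real_inner_comm, norm_smul,
          Real.norm_eq_abs, mul_pow, sq_abs]
      have e1 : (B t - B (t+1)) * b t = (B t - B (t+1)) / (2 * η t) := by
        rw [eq_div_iff (mul_pos two_pos (hηpos t)).ne', mul_assoc, hbη t, mul_one]
      rw [e1]
      have hnum : 0 ≤ B t - 2 * (η t * I)
          + η t ^ 2 * ‖u t‖ ^ 2 - B (t+1) := by
        rw [← hBt] at hexp
        linarith [hsq, hexp.ge, hexp.le]
      have expand : (B t - B (t+1)) / (2 * η t) + η t * ‖u t‖ ^ 2 / 2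
          - I
          = (B t - 2 * (η t * I)
              + η t ^ 2 * ‖u t‖ ^ 2 - B (t+1)) / (2 * η t) := by
        have h2ηne : (2 * η t) ≠ 0 := (mul_pos two_pos (hηpos t)).ne'
        rw [eq_div_iff h2ηne, sub_mul, add_mul, div_mul_cancel₀ _ h2ηne]; ring
      have hnn : 0 ≤ (B t - 2 * (η t * I)
          + η t ^ 2 * ‖u t‖ ^ 2 - B (t+1)) / (2 * η t) :=
        div_nonneg hnum (by linarith [hηpos t])
      rw [← expand] at hnn
      linarith
    -- summing up
    have hsum1 : ∑ t ∈ Finset.Icc 1 T, (inner ℝ (u t) (x t - v) : ℝ)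
        ≤ ∑ t ∈ Finset.Icc 1 T, (B t - B (t+1)) * b t
          + ∑ t ∈ Finset.Icc 1 T, η t * ‖u t‖ ^ 2 / 2 := by
      rw [← Finset.sum_add_distrib]
      exact Finset.sum_le_sum hstep
    have hBT1 : B (T+1) = 0 := by rw [hBdef, if_neg (by omega)]
    have hsum2 : ∑ t ∈ Finset.Icc 1 T, (B t - B (t+1)) * b t ≤ D ^ 2 * b T := by
      have h := ogd_aux_telescope B b (D ^ 2) hBM hbnn hbmono T
      rw [hBT1] at h
      linarith [h]
    have hsum3 : ∑ t ∈ Finset.Icc 1 T, η t * ‖u t‖ ^ 2 / 2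
        ≤ D / (2 * Real.sqrt 2) * (2 * Real.sqrt (δ T)) := by
      have haux := ogd_aux_div_sqrt (fun t => ‖u t‖ ^ 2) (fun t => sq_nonneg _) δ hδ T
      have heq : ∀ t ∈ Finset.Icc 1 T, η t * ‖u t‖ ^ 2 / 2
          = D / (2 * Real.sqrt 2) * (‖u t‖ ^ 2 / Real.sqrt (δ t)) := by
        intro t _
        rw [hη]
        field_simp
      rw [Finset.sum_congr rfl heq, ← Finset.mul_sum]
      have hbd : ∑ t ∈ Finset.Icc 1 T, ‖u t‖ ^ 2 / Real.sqrt (δ t)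
          ≤ 2 * Real.sqrt (δ T) := le_trans haux (by linarith [Real.sqrt_nonneg (δ 0)])
      exact mul_le_mul_of_nonneg_left hbd (by positivity)
    have htotal : ∑ t ∈ Finset.Icc 1 T, (inner ℝ (u t) (x t - v) : ℝ)
        ≤ Real.sqrt 2 * D * Real.sqrt (δ T) := by
      have e : D ^ 2 * b T + D / (2 * Real.sqrt 2) * (2 * Real.sqrt (δ T))
          = Real.sqrt 2 * D * Real.sqrt (δ T) := by
        rw [hbdef]
        exact ogd_aux_e D (Real.sqrt 2) (Real.sqrt (δ T)) hDne hs2.ne' h22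
      linarith [hsum1, hsum2, hsum3, e.le, e.ge]
    -- master inequality
    have hmaster : ∑ t ∈ Finset.Icc 1 T, (f t (x t) - f t v)
        ≤ Real.sqrt 2 * D * Real.sqrt (δ T) - V T ^ 2 / Real.sqrt T := by
      have h1 : ∑ t ∈ Finset.Icc 1 T, ((f t (x t) - f t v)
          + (2 * V t / Real.sqrt T) * max (g t (x t)) 0)
          ≤ Real.sqrt 2 * D * Real.sqrt (δ T) :=
        le_trans (Finset.sum_le_sum hLdiff) htotal
      rw [Finset.sum_add_distrib] at h1
      linarith [hpen]
    -- bounding sqrt (δ T)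
    have hCnn : 0 ≤ Lf + 2 * V T / Real.sqrt T * Lg :=
      add_nonneg hLf0 (mul_nonneg (hcnn T) hLg0)
    have hδT : δ T ≤ 1 + T * (Lf + 2 * V T / Real.sqrt T * Lg) ^ 2 := by
      rw [hδ]
      have hsumle : ∑ τ ∈ Finset.Icc 1 T, ‖u τ‖ ^ 2
          ≤ ∑ τ ∈ Finset.Icc 1 T, (Lf + 2 * V T / Real.sqrt T * Lg) ^ 2 := by
        apply Finset.sum_le_sum
        intro t ht
        have h1 := hub t ht
        have h2 : Lf + 2 * V t / Real.sqrt T * Lg ≤ Lf + 2 * V T / Real.sqrt T * Lg := by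
          have h3 : 2 * V t / Real.sqrt T ≤ 2 * V T / Real.sqrt T :=
            (div_le_div_iff_of_pos_right hsT).mpr (by linarith [hVmono t (Finset.mem_Icc.mp ht).2])
          nlinarith [hLg0, h3]
        exact pow_le_pow_left₀ (norm_nonneg _) (le_trans h1 h2) 2
      rw [Finset.sum_const, Nat.card_Icc] at hsumle
      simp only [Nat.add_sub_cancel, nsmul_eq_mul] at hsumle
      linarith
    have hsδT : Real.sqrt (δ T) ≤ 1 + Real.sqrt T * (Lf + 2 * V T / Real.sqrt T * Lg) := by
      have h1 : δ T ≤ (1 + Real.sqrt T * (Lf + 2 * V T / Real.sqrt T * Lg)) ^ 2 := by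
        nlinarith [hδT, mul_nonneg hsT.le hCnn, hTT]
      calc Real.sqrt (δ T) ≤ Real.sqrt ((1 + Real.sqrt T * (Lf + 2 * V T / Real.sqrt T * Lg)) ^ 2) :=
            Real.sqrt_le_sqrt h1
        _ = 1 + Real.sqrt T * (Lf + 2 * V T / Real.sqrt T * Lg) :=
            Real.sqrt_sq (by positivity)
    -- final algebra
    have hW : V T ^ 2 / Real.sqrt T * Real.sqrt T = V T ^ 2 := div_mul_cancel₀ _ hsT.ne'
    have haT : (Real.sqrt 2 * D * Lg * Real.sqrt T) ^ 2 = 2 * T * D ^ 2 * Lg ^ 2 := by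
      rw [mul_pow, mul_pow, mul_pow, Real.sq_sqrt (by norm_num : (0:ℝ) ≤ 2),
        Real.sq_sqrt hTpos.le]
      ring
    have hP : 0 ≤ V T ^ 2 - 2 * (Real.sqrt 2 * D * Lg * Real.sqrt T) * V T
        + 2 * T * D ^ 2 * Lg ^ 2 := by
      nlinarith [sq_nonneg (V T - Real.sqrt 2 * D * Lg * Real.sqrt T), haT]
    have h5' : (2 * Real.sqrt 2 * D * Lg * V T - V T ^ 2 / Real.sqrt T) * Real.sqrt T
        ≤ (2 * Real.sqrt T * D ^ 2 * Lg ^ 2) * Real.sqrt T := by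
      nlinarith [hP, hW, hTT]
    have h5 : 2 * Real.sqrt 2 * D * Lg * V T - V T ^ 2 / Real.sqrt T
        ≤ 2 * Real.sqrt T * D ^ 2 * Lg ^ 2 := le_of_mul_le_mul_right h5' hsT
    have hsplit : Real.sqrt 2 * D * (1 + Real.sqrt T * (Lf + 2 * V T / Real.sqrt T * Lg))
        = Real.sqrt 2 * D + Real.sqrt 2 * Real.sqrt T * D * Lf
          + 2 * Real.sqrt 2 * D * Lg * V T := by
      field_simp
      ring
    have h2T : Real.sqrt (2 * (T:ℝ)) = Real.sqrt 2 * Real.sqrt T :=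
      Real.sqrt_mul (by norm_num) _
    have hfin : ∑ t ∈ Finset.Icc 1 T, f t (x t) - ∑ t ∈ Finset.Icc 1 T, f t v
        = ∑ t ∈ Finset.Icc 1 T, (f t (x t) - f t v) := by rw [Finset.sum_sub_distrib]
    rw [hfin, h2T]
    have hmono : Real.sqrt 2 * D * Real.sqrt (δ T)
        ≤ Real.sqrt 2 * D * (1 + Real.sqrt T * (Lf + 2 * V T / Real.sqrt T * Lg)) :=
      mul_le_mul_of_nonneg_left hsδT (by positivity)
    nlinarith [hmaster, hmono, hsplit.le, hsplit.ge, h5]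
end

section
/- With the quadratic penalty Φ(v) := v²/√T, the cumulative constraint violation of the adaptive OGD iterates satisfies the explicit bound V̂_T ≤ √(2T)·D·L_g + √(2T·D²·L_g² + √2·√T·D + √2·T·D·L_f + 2·F·T^{3/2}), provided there exists a feasible point u ∈ X with ĝ_t(u) ≤ 0 for all t ∈ {1,…,T}. -/
lemma aux_sqrt_tele (δ : ℕ → ℝ) (hpos : ∀ t, 0 < δ t) (hmono : ∀ t, δ t ≤ δ (t+1)) :
    ∀ T : ℕ, ∑ t ∈ Finset.Icc 1 T, (δ t - δ (t-1)) / Real.sqrt (δ t)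
      ≤ 2 * (Real.sqrt (δ T) - Real.sqrt (δ 0)) := by
  intro T
  induction T with
  | zero => simp
  | succ n ih =>
    rw [Finset.sum_Icc_succ_top (by omega)]
    have hs : (0:ℝ) < Real.sqrt (δ (n+1)) := Real.sqrt_pos.2 (hpos _)
    have h2 : Real.sqrt (δ (n+1))^2 = δ (n+1) := Real.sq_sqrt (hpos _).le
    have h3 : Real.sqrt (δ n)^2 = δ n := Real.sq_sqrt (hpos _).le
    have h4 : Real.sqrt (δ n) ≤ Real.sqrt (δ (n+1)) := Real.sqrt_le_sqrt (hmono n)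
    have h1 : (δ (n+1) - δ ((n+1)-1)) / Real.sqrt (δ (n+1))
        ≤ 2 * (Real.sqrt (δ (n+1)) - Real.sqrt (δ n)) := by
      simp only [Nat.add_sub_cancel]
      rw [div_le_iff₀ hs]
      nlinarith [Real.sqrt_nonneg (δ n)]
    linarith

lemma aux_phi_tele (V : ℕ → ℝ) : ∀ T : ℕ,
    V T ^ 2 - V 0 ^ 2 ≤ ∑ t ∈ Finset.Icc 1 T, 2 * V t * (V t - V (t-1)) := by
  intro T
  induction T with
  | zero => simp
  | succ n ih =>
    rw [Finset.sum_Icc_succ_top (by omega)]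
    have : V (n+1) ^ 2 - V n ^ 2 ≤ 2 * V (n+1) * (V (n+1) - V ((n+1)-1)) := by
      simp only [Nat.add_sub_cancel]; nlinarith [sq_nonneg (V (n+1) - V n)]
    linarith

lemma aux_tele (w a : ℕ → ℝ) (C : ℝ) :
    ∀ T : ℕ, 1 ≤ T →
    (∀ t, 1 ≤ t → t + 1 ≤ T → w t ≤ w (t+1)) →
    (∀ t, 1 ≤ t → t ≤ T → 0 ≤ w t) →
    (∀ t, 1 ≤ t → t ≤ T → 0 ≤ a t ∧ a t ≤ C) →
    (∑ t ∈ Finset.Icc 1 (T-1), w t * (a t - a (t+1))) + w T * a T ≤ w T * C := by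
  intro T
  induction T with
  | zero => omega
  | succ n ih =>
    intro _ hwmono hwpos ha
    rcases Nat.eq_zero_or_pos n with hn | hn
    · subst hn
      have : (1:ℕ) - 1 = 0 := rfl
      rw [this]
      simp only [show Finset.Icc 1 0 = ∅ from rfl, Finset.sum_empty, zero_add]
      have h2 := ha 1 (le_refl _) (le_refl _)
      nlinarith [hwpos 1 (le_refl _) (le_refl _), h2.1, h2.2]
    · have hTm : n + 1 - 1 = n := rfl
      rw [hTm, ← Nat.sub_add_cancel hn, Finset.sum_Icc_succ_top (by omega),
        Nat.sub_add_cancel hn]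
      have ihn := ih hn (fun t h1 h2 => hwmono t h1 (by omega))
        (fun t h1 h2 => hwpos t h1 (by omega)) (fun t h1 h2 => ha t h1 (by omega))
      have h1 : w n ≤ w (n+1) := hwmono n hn (by omega)
      have h2 := ha (n+1) (by omega) (le_refl _)
      nlinarith [h2.1, h2.2]

set_option maxHeartbeats 1000000 in
/-- With the quadratic penalty `Φ(v) = v²/√T`, the cumulative
constraint violation of adaptive OGD satisfies
`V̂_T ≤ √(2T)·D·L_g + √(2T·D²·L_g² + √2·√T·D + √2·T·D·L_f + 2·F·T^{3/2})`,
provided a feasible point exists. -/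
theorem quadratic_penalty_ogd_ccv
    (d T : ℕ) (hd : 0 < d) (hT : 0 < T)
    (X : Set (EuclideanSpace ℝ (Fin d)))
    (hXne : X.Nonempty) (hXcpt : IsCompact X) (hXconv : Convex ℝ X)
    (D : ℝ) (hD : D = Metric.diam X)
    (Lf Lg F : ℝ)
    (f g : ℕ → EuclideanSpace ℝ (Fin d) → ℝ)
    (hfconv : ∀ t ∈ Finset.Icc 1 T, ConvexOn ℝ Set.univ (f t))
    (hgconv : ∀ t ∈ Finset.Icc 1 T, ConvexOn ℝ Set.univ (g t))
    (hfLip : ∀ t ∈ Finset.Icc 1 T, ∀ x y, |f t x - f t y| ≤ Lf * ‖x - y‖)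
    (hgLip : ∀ t ∈ Finset.Icc 1 T, ∀ x y, |g t x - g t y| ≤ Lg * ‖x - y‖)
    (hfbd : ∀ t ∈ Finset.Icc 1 T, ∀ x ∈ X, |f t x| ≤ F)
    -- decisions and subgradients
    (x u : ℕ → EuclideanSpace ℝ (Fin d))
    (hx : ∀ t ∈ Finset.Icc 1 T, x t ∈ X)
    -- cumulative violation and surrogate losses with quadratic penalty
    (V : ℕ → ℝ)
    (hV : ∀ t, V t = ∑ τ ∈ Finset.Icc 1 t, max (g τ (x τ)) 0)
    (L : ℕ → EuclideanSpace ℝ (Fin d) → ℝ)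
    (hL : ∀ t y, L t y = f t y + (2 * V t / Real.sqrt T) * max (g t y) 0)
    -- u t is a subgradient of L t at x t
    (hsub : ∀ t ∈ Finset.Icc 1 T, ∀ y,
      L t y ≥ L t (x t) + (inner ℝ (u t) (y - x t) : ℝ))
    -- step sizes
    (δ η : ℕ → ℝ)
    (hδ : ∀ t, δ t = 1 + ∑ τ ∈ Finset.Icc 1 t, ‖u τ‖ ^ 2)
    (hη : ∀ t, η t = D / (Real.sqrt 2 * Real.sqrt (δ t)))
    -- projected gradient update
    (hupdate : ∀ t ∈ Finset.Icc 1 (T - 1), ∀ y ∈ X,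
      ‖x (t+1) - (x t - η t • u t)‖ ≤ ‖y - (x t - η t • u t)‖)
    -- a feasible point exists
    (hfeas : ∃ v ∈ X, ∀ t ∈ Finset.Icc 1 T, g t v ≤ 0) :
    V T ≤ Real.sqrt (2 * T) * D * Lg
        + Real.sqrt (2 * T * D ^ 2 * Lg ^ 2 + Real.sqrt 2 * Real.sqrt T * D
            + Real.sqrt 2 * T * D * Lf + 2 * F * (T : ℝ) ^ ((3:ℝ)/2)) := by
  obtain ⟨v, hvX, hgv⟩ := hfeas
  have hT1 : 1 ∈ Finset.Icc 1 T := by simp [Finset.mem_Icc]; omega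
  have hTpos : (0:ℝ) < (T:ℝ) := by exact_mod_cast hT
  have hsqT : (0:ℝ) < Real.sqrt T := Real.sqrt_pos.2 hTpos
  have hsqT2 : Real.sqrt T ^ 2 = (T:ℝ) := Real.sq_sqrt hTpos.le
  have s2pos : (0:ℝ) < Real.sqrt 2 := Real.sqrt_pos.2 (by norm_num)
  have s2sq : Real.sqrt 2 ^ 2 = 2 := Real.sq_sqrt (by norm_num)
  have hDnn : 0 ≤ D := hD ▸ Metric.diam_nonneg
  have hdist : ∀ a ∈ X, ∀ b ∈ X, ‖a - b‖ ≤ D := by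
    intro a ha b hb
    rw [hD, ← dist_eq_norm]
    exact Metric.dist_le_diam_of_mem hXcpt.isBounded ha hb
  -- Lf, Lg nonneg
  have hvecne : ∃ e : EuclideanSpace ℝ (Fin d), ‖e‖ = 1 := by
    refine ⟨EuclideanSpace.single ⟨0, hd⟩ 1, ?_⟩
    rw [EuclideanSpace.norm_single]; norm_num
  obtain ⟨e, he⟩ := hvecne
  have hLf0 : 0 ≤ Lf := by
    have h := hfLip 1 hT1 0 e
    rw [zero_sub, norm_neg, he, mul_one] at h
    exact le_trans (abs_nonneg _) h
  have hLg0 : 0 ≤ Lg := by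
    have h := hgLip 1 hT1 0 e
    rw [zero_sub, norm_neg, he, mul_one] at h
    exact le_trans (abs_nonneg _) h
  have hF0 : 0 ≤ F := le_trans (abs_nonneg _) (hfbd 1 hT1 (x 1) (hx 1 hT1))
  -- V facts
  have hVnn : ∀ t, 0 ≤ V t := by
    intro t; rw [hV]
    exact Finset.sum_nonneg fun i _ => le_max_right _ _
  have hV0 : V 0 = 0 := by rw [hV]; simp
  have hVmono : ∀ t, t ≤ T → V t ≤ V T := by
    intro t ht
    rw [hV, hV]
    exact Finset.sum_le_sum_of_subset_of_nonneg
      (Finset.Icc_subset_Icc_right ht) (fun i _ _ => le_max_right _ _)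
  have hVstep : ∀ t, 1 ≤ t → V t - V (t-1) = max (g t (x t)) 0 := by
    intro t ht
    rw [hV t, hV (t-1)]
    nth_rewrite 1 [show t = (t-1)+1 by omega]
    rw [Finset.sum_Icc_succ_top (by omega), show t - 1 + 1 = t by omega]
    ring
  -- case D = 0
  rcases hDnn.eq_or_lt with hD0 | hDpos
  · have hVT : V T = 0 := by
      rw [hV]
      apply Finset.sum_eq_zero
      intro t ht
      have hxt : x t = v := by
        have h1 := hdist (x t) (hx t ht) v hvX
        rw [← hD0] at h1
        have := norm_nonneg (x t - v)
        have : ‖x t - v‖ = 0 := le_antisymm h1 this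
        rwa [norm_eq_zero, sub_eq_zero] at this
      rw [hxt]
      exact max_eq_right (hgv t ht)
    rw [hVT, ← hD0]
    have := Real.sqrt_nonneg (2 * (T:ℝ) * 0 ^ 2 * Lg ^ 2 + Real.sqrt 2 * Real.sqrt T * 0
            + Real.sqrt 2 * T * 0 * Lf + 2 * F * (T : ℝ) ^ ((3:ℝ)/2))
    nlinarith
  -- main case D > 0
  have hcnn : ∀ t, 0 ≤ 2 * V t / Real.sqrt T := fun t =>
    div_nonneg (by linarith [hVnn t]) hsqT.le
  -- norm bound on subgradients
  have hub : ∀ t ∈ Finset.Icc 1 T, ‖u t‖ ≤ Lf + (2 * V t / Real.sqrt T) * Lg := by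
    intro t ht
    have h := hsub t ht (x t + u t)
    rw [add_sub_cancel_left, real_inner_self_eq_norm_sq] at h
    have hLd : L t (x t + u t) - L t (x t)
        ≤ (Lf + (2 * V t / Real.sqrt T) * Lg) * ‖u t‖ := by
      rw [hL, hL]
      have h1 : |f t (x t + u t) - f t (x t)| ≤ Lf * ‖u t‖ := by
        have := hfLip t ht (x t + u t) (x t)
        rwa [add_sub_cancel_left] at this
      have h2 : |max (g t (x t + u t)) 0 - max (g t (x t)) 0| ≤ Lg * ‖u t‖ := by
        refine le_trans (abs_max_sub_max_le_abs _ _ _) ?_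
        have := hgLip t ht (x t + u t) (x t)
        rwa [add_sub_cancel_left] at this
      have h3 := abs_le.1 h1
      have h4 := abs_le.1 h2
      have := hcnn t
      nlinarith [h3.2, h4.2]
    have key : ‖u t‖ ^ 2 ≤ (Lf + (2 * V t / Real.sqrt T) * Lg) * ‖u t‖ := by linarith
    rcases eq_or_lt_of_le (norm_nonneg (u t)) with h0 | h0
    · rw [← h0]
      have := hcnn t
      nlinarith
    · nlinarith
  -- δ facts
  have hδpos : ∀ t, 0 < δ t := by
    intro t; rw [hδ]
    have : (0:ℝ) ≤ ∑ τ ∈ Finset.Icc 1 t, ‖u τ‖ ^ 2 :=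
      Finset.sum_nonneg fun i _ => sq_nonneg _
    linarith
  have hδstep : ∀ t, 1 ≤ t → δ t - δ (t-1) = ‖u t‖ ^ 2 := by
    intro t ht
    rw [hδ t, hδ (t-1)]
    nth_rewrite 1 [show t = (t-1)+1 by omega]
    rw [Finset.sum_Icc_succ_top (by omega), show t - 1 + 1 = t by omega]
    ring
  have hδmono : ∀ t, δ t ≤ δ (t+1) := by
    intro t
    have h := hδstep (t+1) (by omega)
    simp only [Nat.add_sub_cancel] at h
    nlinarith [sq_nonneg ‖u (t+1)‖]
  have hδ1 : ∀ t, (1:ℝ) ≤ δ t := by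
    intro t; rw [hδ]
    have : (0:ℝ) ≤ ∑ τ ∈ Finset.Icc 1 t, ‖u τ‖ ^ 2 :=
      Finset.sum_nonneg fun i _ => sq_nonneg _
    linarith
  have hsδpos : ∀ t, 0 < Real.sqrt (δ t) := fun t => Real.sqrt_pos.2 (hδpos t)
  have hηpos : ∀ t, 0 < η t := by
    intro t; rw [hη]
    exact div_pos hDpos (mul_pos s2pos (hsδpos t))
  -- projection inequality
  have hproj : ∀ t, 1 ≤ t → t ≤ T - 1 →
      ‖x (t+1) - v‖ ^ 2 ≤ ‖(x t - η t • u t) - v‖ ^ 2 := by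
    intro t ht1 ht2
    have hx1 : x (t+1) ∈ X := hx (t+1) (by simp [Finset.mem_Icc]; omega)
    set z := x t - η t • u t with hz
    haveI : Nonempty X := ⟨⟨v, hvX⟩⟩
    have hmin : ‖z - x (t+1)‖ = ⨅ w : X, ‖z - w‖ := by
      apply le_antisymm
      · refine le_ciInf fun w => ?_
        rw [norm_sub_rev z, norm_sub_rev z]
        exact hupdate t (by simp [Finset.mem_Icc]; omega) w w.2
      · have hbdd : BddBelow (Set.range fun w : X => ‖z - (w : EuclideanSpace ℝ (Fin d))‖) := by
          refine ⟨0, ?_⟩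
          rintro r ⟨w, rfl⟩
          exact norm_nonneg _
        exact ciInf_le hbdd ⟨x (t+1), hx1⟩
    have key := (norm_eq_iInf_iff_real_inner_le_zero hXconv hx1).1 hmin v hvX
    have hexp : z - v = (z - x (t+1)) - (v - x (t+1)) := by abel
    have h2 : ‖z - v‖ ^ 2 = ‖z - x (t+1)‖ ^ 2
        - 2 * (inner ℝ (z - x (t+1)) (v - x (t+1)) : ℝ) + ‖v - x (t+1)‖ ^ 2 := by
      rw [hexp]; exact norm_sub_sq_real _ _
    have h3 : ‖x (t+1) - v‖ = ‖v - x (t+1)‖ := norm_sub_rev _ _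
    rw [h3]
    linarith [key, sq_nonneg ‖z - x (t+1)‖]
  -- one-step inequality
  have hstep : ∀ t, 1 ≤ t → t ≤ T - 1 →
      (inner ℝ (u t) (x t - v) : ℝ) ≤ (1 / (2 * η t)) * (‖x t - v‖ ^ 2 - ‖x (t+1) - v‖ ^ 2)
        + η t / 2 * ‖u t‖ ^ 2 := by
    intro t ht1 ht2
    have hexp : (x t - η t • u t) - v = (x t - v) - η t • u t := by abel
    have h2 : ‖(x t - η t • u t) - v‖ ^ 2 = ‖x t - v‖ ^ 2
        - 2 * (η t * (inner ℝ (u t) (x t - v) : ℝ)) + η t ^ 2 * ‖u t‖ ^ 2 := by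
      rw [hexp, norm_sub_sq_real, real_inner_smul_right, norm_smul,
        Real.norm_eq_abs, abs_of_pos (hηpos t), real_inner_comm]
      ring
    have h1 := hproj t ht1 ht2
    have hη2 : (0:ℝ) < 2 * η t := by linarith [hηpos t]
    rw [← sub_nonneg]
    have expand : (1 / (2 * η t)) * (‖x t - v‖ ^ 2 - ‖x (t+1) - v‖ ^ 2)
        + η t / 2 * ‖u t‖ ^ 2 - (inner ℝ (u t) (x t - v) : ℝ)
        = (‖(x t - η t • u t) - v‖ ^ 2 - ‖x (t+1) - v‖ ^ 2
           + (‖x t - v‖ ^ 2 - ‖x t - v‖ ^ 2)) / (2 * η t)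
          + (η t ^ 2 * ‖u t‖ ^ 2 - η t ^ 2 * ‖u t‖ ^ 2) / (2 * η t) := by
      rw [h2]; have := (hηpos t).ne'; field_simp; ring
    rw [expand]
    have hnum : 0 ≤ ‖(x t - η t • u t) - v‖ ^ 2 - ‖x (t+1) - v‖ ^ 2
        + (‖x t - v‖ ^ 2 - ‖x t - v‖ ^ 2) := by linarith
    have h5 : (0:ℝ) ≤ (η t ^ 2 * ‖u t‖ ^ 2 - η t ^ 2 * ‖u t‖ ^ 2) / (2 * η t) := by
      simp
    exact add_nonneg (div_nonneg hnum hη2.le) h5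
  -- last-step inequality
  have hlast : (inner ℝ (u T) (x T - v) : ℝ) ≤ (1 / (2 * η T)) * ‖x T - v‖ ^ 2
      + η T / 2 * ‖u T‖ ^ 2 := by
    have h1 : (inner ℝ (u T) (x T - v) : ℝ) ≤ ‖u T‖ * ‖x T - v‖ := real_inner_le_norm _ _
    have hη2 : (0:ℝ) < 2 * η T := by linarith [hηpos T]
    have h3 : ‖u T‖ * ‖x T - v‖ ≤ (1 / (2 * η T)) * ‖x T - v‖ ^ 2 + η T / 2 * ‖u T‖ ^ 2 := by
      rw [← sub_nonneg]
      have expand : (1 / (2 * η T)) * ‖x T - v‖ ^ 2 + η T / 2 * ‖u T‖ ^ 2 - ‖u T‖ * ‖x T - v‖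
          = (‖x T - v‖ - η T * ‖u T‖) ^ 2 / (2 * η T) := by
        have := (hηpos T).ne'; field_simp; ring
      rw [expand]
      positivity
    linarith
  have hins : Finset.Icc 1 T = insert T (Finset.Icc 1 (T-1)) := by
    ext a; simp only [Finset.mem_Icc, Finset.mem_insert]; omega
  have hnmem : T ∉ Finset.Icc 1 (T-1) := by simp only [Finset.mem_Icc]; omega
  -- regret bound
  have hreg : ∑ t ∈ Finset.Icc 1 T, (inner ℝ (u t) (x t - v) : ℝ)
      ≤ Real.sqrt 2 * D * Real.sqrt (δ T) := by
    have hwmono : ∀ t, 1 ≤ t → t + 1 ≤ T →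
        (1:ℝ) / (2 * η t) ≤ 1 / (2 * η (t+1)) := by
      intro t _ _
      have hηanti : η (t+1) ≤ η t := by
        rw [hη, hη]
        exact div_le_div_of_nonneg_left hDpos.le (mul_pos s2pos (hsδpos t))
          (mul_le_mul_of_nonneg_left (Real.sqrt_le_sqrt (hδmono t)) s2pos.le)
      have h1 : (0:ℝ) < 2 * η (t+1) := by linarith [hηpos (t+1)]
      apply one_div_le_one_div_of_le h1
      linarith
    have hwpos : ∀ t, 1 ≤ t → t ≤ T → (0:ℝ) ≤ 1 / (2 * η t) := by
      intro t _ _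
      have := hηpos t
      positivity
    have habd : ∀ t, 1 ≤ t → t ≤ T → 0 ≤ ‖x t - v‖ ^ 2 ∧ ‖x t - v‖ ^ 2 ≤ D ^ 2 := by
      intro t h1 h2
      have hxt : x t ∈ X := hx t (by simp [Finset.mem_Icc]; omega)
      have := hdist (x t) hxt v hvX
      have hn := norm_nonneg (x t - v)
      constructor
      · positivity
      · nlinarith
    have htele := aux_tele (fun t => 1 / (2 * η t)) (fun t => ‖x t - v‖ ^ 2) (D ^ 2) T hT
      hwmono hwpos habd
    have hsum1 : ∑ t ∈ Finset.Icc 1 (T-1), (inner ℝ (u t) (x t - v) : ℝ)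
        ≤ (∑ t ∈ Finset.Icc 1 (T-1), (1 / (2 * η t)) * (‖x t - v‖ ^ 2 - ‖x (t+1) - v‖ ^ 2))
          + ∑ t ∈ Finset.Icc 1 (T-1), (η t / 2 * ‖u t‖ ^ 2) := by
      rw [← Finset.sum_add_distrib]
      apply Finset.sum_le_sum
      intro t ht
      rw [Finset.mem_Icc] at ht
      exact hstep t ht.1 ht.2
    -- second sum bound
    have hterm : ∀ t ∈ Finset.Icc 1 T, η t / 2 * ‖u t‖ ^ 2
        = D / (2 * Real.sqrt 2) * ((δ t - δ (t-1)) / Real.sqrt (δ t)) := by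
      intro t ht
      rw [Finset.mem_Icc] at ht
      rw [hη, ← hδstep t ht.1]
      have h1 := (hsδpos t).ne'
      field_simp
    have hsum2 : ∑ t ∈ Finset.Icc 1 T, (η t / 2 * ‖u t‖ ^ 2)
        ≤ D / (2 * Real.sqrt 2) * (2 * Real.sqrt (δ T)) := by
      rw [Finset.sum_congr rfl hterm, ← Finset.mul_sum]
      have h1 := aux_sqrt_tele δ hδpos hδmono T
      have h2 : (0:ℝ) ≤ D / (2 * Real.sqrt 2) := by positivity
      have h3 := Real.sqrt_nonneg (δ 0)
      nlinarith
    -- combine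
    have hsplitI : ∑ t ∈ Finset.Icc 1 T, (inner ℝ (u t) (x t - v) : ℝ)
        = (inner ℝ (u T) (x T - v) : ℝ)
          + ∑ t ∈ Finset.Icc 1 (T-1), (inner ℝ (u t) (x t - v) : ℝ) := by
      rw [hins, Finset.sum_insert hnmem]
    have hsplitB : ∑ t ∈ Finset.Icc 1 T, (η t / 2 * ‖u t‖ ^ 2)
        = η T / 2 * ‖u T‖ ^ 2 + ∑ t ∈ Finset.Icc 1 (T-1), (η t / 2 * ‖u t‖ ^ 2) := by
      rw [hins, Finset.sum_insert hnmem]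
    have htot : ∑ t ∈ Finset.Icc 1 T, (inner ℝ (u t) (x t - v) : ℝ)
        ≤ (1 / (2 * η T)) * D ^ 2 + D / (2 * Real.sqrt 2) * (2 * Real.sqrt (δ T)) := by
      rw [hsplitI]
      calc (inner ℝ (u T) (x T - v) : ℝ)
            + ∑ t ∈ Finset.Icc 1 (T-1), (inner ℝ (u t) (x t - v) : ℝ)
          ≤ ((1 / (2 * η T)) * ‖x T - v‖ ^ 2 + η T / 2 * ‖u T‖ ^ 2)
            + ((∑ t ∈ Finset.Icc 1 (T-1), (1 / (2 * η t)) * (‖x t - v‖ ^ 2 - ‖x (t+1) - v‖ ^ 2))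
              + ∑ t ∈ Finset.Icc 1 (T-1), (η t / 2 * ‖u t‖ ^ 2)) := by
            exact add_le_add hlast hsum1
        _ = ((∑ t ∈ Finset.Icc 1 (T-1), (1 / (2 * η t)) * (‖x t - v‖ ^ 2 - ‖x (t+1) - v‖ ^ 2))
              + (1 / (2 * η T)) * ‖x T - v‖ ^ 2)
            + ∑ t ∈ Finset.Icc 1 T, (η t / 2 * ‖u t‖ ^ 2) := by
            rw [hsplitB]; ring
        _ ≤ (1 / (2 * η T)) * D ^ 2 + D / (2 * Real.sqrt 2) * (2 * Real.sqrt (δ T)) := by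
            exact add_le_add htele hsum2
    -- algebra: RHS = √2 D √δT
    have hWT : (1 / (2 * η T)) * D ^ 2 = Real.sqrt 2 * Real.sqrt (δ T) * D / 2 := by
      rw [hη]
      field_simp
    have hB : D / (2 * Real.sqrt 2) * (2 * Real.sqrt (δ T))
        = Real.sqrt 2 * Real.sqrt (δ T) * D / 2 := by
      rw [div_mul_eq_mul_div, eq_div_iff (by norm_num : (2:ℝ) ≠ 0),
        div_mul_eq_mul_div, div_eq_iff (by positivity : (2:ℝ) * Real.sqrt 2 ≠ 0)]
      linear_combination (-(2 * Real.sqrt (δ T) * D)) * s2sq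
    rw [hWT, hB] at htot
    have := Real.sqrt_nonneg (δ T)
    nlinarith
  -- surrogate regret: violation bound
  have hsurr : V T ^ 2 / Real.sqrt T
      ≤ (∑ t ∈ Finset.Icc 1 T, (inner ℝ (u t) (x t - v) : ℝ)) + 2 * F * T := by
    have hper : ∀ t ∈ Finset.Icc 1 T,
        (1 / Real.sqrt T) * (2 * V t * (V t - V (t-1)))
          ≤ (inner ℝ (u t) (x t - v) : ℝ) + 2 * F := by
      intro t ht
      have h := hsub t ht v
      rw [hL, hL, max_eq_right (hgv t ht), mul_zero] at h
      have hI : (inner ℝ (u t) (v - x t) : ℝ) = -(inner ℝ (u t) (x t - v) : ℝ) := by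
        rw [show v - x t = -(x t - v) by abel, inner_neg_right]
      rw [hI] at h
      have hf1 := (abs_le.1 (hfbd t ht (x t) (hx t ht))).1
      have hf2 := (abs_le.1 (hfbd t ht v hvX)).2
      have hVs := hVstep t (Finset.mem_Icc.1 ht).1
      have hkey : (2 * V t / Real.sqrt T) * max (g t (x t)) 0
          ≤ (inner ℝ (u t) (x t - v) : ℝ) + 2 * F := by linarith
      calc (1 / Real.sqrt T) * (2 * V t * (V t - V (t-1)))
          = (2 * V t / Real.sqrt T) * max (g t (x t)) 0 := by rw [← hVs]; ring
        _ ≤ _ := hkey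
    have hsum := Finset.sum_le_sum hper
    rw [← Finset.mul_sum] at hsum
    have hphi := aux_phi_tele V T
    have hRHS : ∑ t ∈ Finset.Icc 1 T, ((inner ℝ (u t) (x t - v) : ℝ) + 2 * F)
        = (∑ t ∈ Finset.Icc 1 T, (inner ℝ (u t) (x t - v) : ℝ)) + 2 * F * T := by
      rw [Finset.sum_add_distrib, Finset.sum_const, Nat.card_Icc]
      simp only [Nat.add_sub_cancel, nsmul_eq_mul]
      ring
    rw [hRHS] at hsum
    have h1 : V T ^ 2 / Real.sqrt T = (1 / Real.sqrt T) * (V T ^ 2 - V 0 ^ 2) := by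
      rw [hV0]; ring
    rw [h1]
    refine le_trans ?_ hsum
    apply mul_le_mul_of_nonneg_left hphi (by positivity)
  -- bound on sqrt (δ T)
  have hKnn : 0 ≤ Lf + 2 * V T * Lg / Real.sqrt T := by
    have := hVnn T
    have h2 : 0 ≤ 2 * V T * Lg / Real.sqrt T := by positivity
    linarith
  have hδTbd : Real.sqrt (δ T) ≤ 1 + Real.sqrt T * Lf + 2 * V T * Lg := by
    have hubK : ∀ t ∈ Finset.Icc 1 T,
        ‖u t‖ ^ 2 ≤ (Lf + 2 * V T * Lg / Real.sqrt T) ^ 2 := by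
      intro t ht
      have h1 := hub t ht
      have hVt := hVnn t
      have hVle := hVmono t (Finset.mem_Icc.1 ht).2
      have h2 : Lf + (2 * V t / Real.sqrt T) * Lg ≤ Lf + 2 * V T * Lg / Real.sqrt T := by
        have h3 : (2 * V t / Real.sqrt T) * Lg ≤ 2 * V T * Lg / Real.sqrt T := by
          rw [div_mul_eq_mul_div]
          exact (div_le_div_iff_of_pos_right hsqT).2 (by nlinarith)
        linarith
      have hn := norm_nonneg (u t)
      nlinarith
    have hδle : δ T ≤ 1 + T * (Lf + 2 * V T * Lg / Real.sqrt T) ^ 2 := by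
      rw [hδ]
      have h1 := Finset.sum_le_sum hubK
      rw [Finset.sum_const, Nat.card_Icc] at h1
      simp only [Nat.add_sub_cancel, nsmul_eq_mul] at h1
      linarith
    calc Real.sqrt (δ T)
        ≤ Real.sqrt ((1 + Real.sqrt T * (Lf + 2 * V T * Lg / Real.sqrt T)) ^ 2) := by
          apply Real.sqrt_le_sqrt
          nlinarith [hsqT2, hsqT.le, hKnn]
      _ = 1 + Real.sqrt T * (Lf + 2 * V T * Lg / Real.sqrt T) := by
          rw [Real.sqrt_sq (by positivity)]
      _ = 1 + Real.sqrt T * Lf + 2 * V T * Lg := by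
          field_simp
          ring
  -- combine into quadratic inequality
  have hfinal2 : V T ^ 2 ≤ 2 * (Real.sqrt 2 * Real.sqrt T * D * Lg) * V T
      + (Real.sqrt 2 * Real.sqrt T * D + Real.sqrt 2 * T * D * Lf
        + 2 * F * T * Real.sqrt T) := by
    have h2 : Real.sqrt 2 * D * Real.sqrt (δ T)
        ≤ Real.sqrt 2 * D * (1 + Real.sqrt T * Lf + 2 * V T * Lg) := by
      apply mul_le_mul_of_nonneg_left hδTbd (by positivity)
    have h3 : V T ^ 2 / Real.sqrt T
        ≤ Real.sqrt 2 * D * (1 + Real.sqrt T * Lf + 2 * V T * Lg) + 2 * F * T := by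
      linarith
    have h4 : V T ^ 2
        ≤ (Real.sqrt 2 * D * (1 + Real.sqrt T * Lf + 2 * V T * Lg) + 2 * F * T)
          * Real.sqrt T := (div_le_iff₀ hsqT).1 h3
    have h5 : (Real.sqrt 2 * D * (1 + Real.sqrt T * Lf + 2 * V T * Lg) + 2 * F * T)
          * Real.sqrt T
        = 2 * (Real.sqrt 2 * Real.sqrt T * D * Lg) * V T
          + (Real.sqrt 2 * Real.sqrt T * D + Real.sqrt 2 * (Real.sqrt T * Real.sqrt T) * D * Lf
            + 2 * F * T * Real.sqrt T) := by ring
    rw [Real.mul_self_sqrt hTpos.le] at h5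
    linarith
  -- resolve the quadratic
  have hb2 : (Real.sqrt 2 * Real.sqrt T * D * Lg) ^ 2 = 2 * T * D ^ 2 * Lg ^ 2 := by
    have : (Real.sqrt 2 * Real.sqrt T * D * Lg) ^ 2
        = (Real.sqrt 2 ^ 2) * (Real.sqrt T ^ 2) * D ^ 2 * Lg ^ 2 := by ring
    rw [this, s2sq, hsqT2]
  have hrpow : ((T:ℝ)) ^ ((3:ℝ)/2) = T * Real.sqrt T := by
    rw [show (3:ℝ)/2 = 1 + 1/2 by norm_num, Real.rpow_add hTpos, Real.rpow_one,
      ← Real.sqrt_eq_rpow]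
  have hargeq : 2 * (T:ℝ) * D ^ 2 * Lg ^ 2 + Real.sqrt 2 * Real.sqrt T * D
      + Real.sqrt 2 * T * D * Lf + 2 * F * (T:ℝ) ^ ((3:ℝ)/2)
      = (Real.sqrt 2 * Real.sqrt T * D * Lg) ^ 2
        + (Real.sqrt 2 * Real.sqrt T * D + Real.sqrt 2 * T * D * Lf
          + 2 * F * T * Real.sqrt T) := by
    rw [hb2, hrpow]; ring
  have hq : (V T - Real.sqrt 2 * Real.sqrt T * D * Lg) ^ 2
      ≤ (Real.sqrt 2 * Real.sqrt T * D * Lg) ^ 2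
        + (Real.sqrt 2 * Real.sqrt T * D + Real.sqrt 2 * T * D * Lf
          + 2 * F * T * Real.sqrt T) := by nlinarith [hfinal2]
  have hVb : V T - Real.sqrt 2 * Real.sqrt T * D * Lg
      ≤ Real.sqrt ((Real.sqrt 2 * Real.sqrt T * D * Lg) ^ 2
        + (Real.sqrt 2 * Real.sqrt T * D + Real.sqrt 2 * T * D * Lf
          + 2 * F * T * Real.sqrt T)) := by
    calc V T - Real.sqrt 2 * Real.sqrt T * D * Lg
        ≤ |V T - Real.sqrt 2 * Real.sqrt T * D * Lg| := le_abs_self _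
      _ = Real.sqrt ((V T - Real.sqrt 2 * Real.sqrt T * D * Lg) ^ 2) :=
          (Real.sqrt_sq_eq_abs _).symm
      _ ≤ _ := Real.sqrt_le_sqrt hq
  rw [Real.sqrt_mul (by norm_num : (0:ℝ) ≤ 2), hargeq]
  linarith
end

section
/- Memory-deviation bound along adaptive OGD iterates: let m ≥ 1 be an integer with T ≥ m+1, and for t = m+1,…,T let h_t : (ℝ^d)^{m+1} → ℝ be L-Lipschitz with respect to the Euclidean norm on the product (ℝ^d)^{m+1}. Then Σ_{t=m+1}^{T} |h_t(x_{t−m}, x_{t−m+1}, …, x_t) − h_t(x_t, x_t, …, x_t)| ≤ m^{3/2}·L·(D/√2)·√(T·log(1 + Σ_{t=1}^{T} ‖u_t‖²)). -/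
open Finset

lemma telescope_norm {E : Type*} [NormedAddCommGroup E] (x : ℕ → E) (a k : ℕ) :
    ‖x a - x (a + k)‖ ≤ ∑ s ∈ Finset.Ico a (a + k), ‖x (s + 1) - x s‖ := by
  induction k with
  | zero => simp
  | succ k ih =>
    have h1 : ‖x a - x (a + (k + 1))‖ ≤ ‖x a - x (a + k)‖ + ‖x (a + k + 1) - x (a + k)‖ := by
      have : x a - x (a + (k + 1)) = (x a - x (a + k)) + -(x (a + k + 1) - x (a + k)) := by
        rw [show a + (k+1) = a + k + 1 from rfl]; abel
      rw [this]
      exact (norm_add_le _ _).trans (by rw [norm_neg])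
    have h2 : ∑ s ∈ Finset.Ico a (a + (k + 1)), ‖x (s + 1) - x s‖
        = (∑ s ∈ Finset.Ico a (a + k), ‖x (s + 1) - x s‖) + ‖x (a + k + 1) - x (a + k)‖ := by
      rw [show a + (k+1) = (a + k) + 1 from rfl,
        Finset.sum_Ico_succ_top (Nat.le_add_right a k)]
    rw [h2]
    exact h1.trans (by linarith)

-- projection lemma
lemma proj_step {E : Type*} [NormedAddCommGroup E] [InnerProductSpace ℝ E]
    {X : Set E} (hXconv : Convex ℝ X) {p q z : E} (hp : p ∈ X) (hq : q ∈ X)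
    (hmin : ∀ y ∈ X, ‖p - z‖ ≤ ‖y - z‖) : ‖p - q‖ ≤ ‖z - q‖ := by
  have hinf : ‖z - p‖ = ⨅ w : X, ‖z - w‖ := by
    haveI : Nonempty X := ⟨⟨p, hp⟩⟩
    refine le_antisymm (le_ciInf fun w => ?_) (ciInf_le (f := fun w : X => ‖z - w‖) ⟨0, fun _ ⟨_, hh⟩ => hh ▸ norm_nonneg _⟩ ⟨p, hp⟩)
    rw [norm_sub_rev z p, norm_sub_rev z w]
    exact hmin w w.2
  have hvar := (norm_eq_iInf_iff_real_inner_le_zero hXconv hp).1 hinf q hq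
  -- ⟪z - p, q - p⟫ ≤ 0
  have hexp : ‖q - z‖ ^ 2 = ‖q - p‖ ^ 2 + 2 * inner ℝ (q - p) (p - z) + ‖p - z‖ ^ 2 := by
    have : q - z = (q - p) + (p - z) := by abel
    rw [this, norm_add_sq_real]
  have hip : (0:ℝ) ≤ inner ℝ (q - p) (p - z) := by
    have : (inner ℝ (q - p) (p - z) : ℝ) = -(inner ℝ (z - p) (q - p) : ℝ) := by
      rw [real_inner_comm]
      rw [show p - z = -(z - p) by abel, inner_neg_left]
    rw [this]; linarith
  have hsq : ‖q - p‖ ^ 2 ≤ ‖q - z‖ ^ 2 := by nlinarith [sq_nonneg ‖p - z‖]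
  rw [norm_sub_rev p q, norm_sub_rev z q]
  calc ‖q - p‖ = Real.sqrt (‖q - p‖ ^ 2) := (Real.sqrt_sq (norm_nonneg _)).symm
    _ ≤ Real.sqrt (‖q - z‖ ^ 2) := Real.sqrt_le_sqrt hsq
    _ = ‖q - z‖ := Real.sqrt_sq (norm_nonneg _)

lemma log_sum_bound (u : ℕ → ℝ) (δ : ℕ → ℝ)
    (hδ : ∀ t, δ t = 1 + ∑ τ ∈ Finset.Icc 1 t, u τ ^ 2) :
    ∀ N, ∑ s ∈ Finset.Icc 1 N, u s ^ 2 / δ s ≤ Real.log (δ N) := by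
  have hδpos : ∀ t, 0 < δ t := by
    intro t; rw [hδ]; positivity
  intro N
  induction N with
  | zero => simp [hδ 0]
  | succ N ih =>
    rw [Finset.sum_Icc_succ_top (Nat.one_le_iff_ne_zero.mpr (Nat.succ_ne_zero N))]
    have hδsucc : δ (N + 1) = δ N + u (N + 1) ^ 2 := by
      rw [hδ, hδ, Finset.sum_Icc_succ_top (Nat.one_le_iff_ne_zero.mpr (Nat.succ_ne_zero N))]
      ring
    have hkey : Real.log (δ N) + u (N + 1) ^ 2 / δ (N + 1) ≤ Real.log (δ (N + 1)) := by
      have h1 := Real.log_le_sub_one_of_pos (div_pos (hδpos N) (hδpos (N + 1)))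
      rw [Real.log_div (hδpos N).ne' (hδpos (N + 1)).ne'] at h1
      have h2 : δ N / δ (N + 1) - 1 = -(u (N + 1) ^ 2 / δ (N + 1)) := by
        rw [hδsucc]
        have hpos := hδpos (N + 1)
        rw [hδsucc] at hpos
        field_simp
        ring
      linarith
    linarith


/-- Memory-deviation bound along adaptive OGD iterates: if each
`h_t : (ℝ^d)^{m+1} → ℝ` is `L`-Lipschitz w.r.t. the Euclidean norm on the
product, then
`Σ_{t=m+1}^T |h_t(x_{t−m},…,x_t) − h_t(x_t,…,x_t)|
   ≤ m^{3/2}·L·(D/√2)·√(T·log(1 + Σ_{t=1}^T ‖u_t‖²))`. -/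
theorem memory_deviation_bound
    (d T : ℕ) (hd : 0 < d) (hT : 0 < T)
    (X : Set (EuclideanSpace ℝ (Fin d)))
    (hXne : X.Nonempty) (hXcpt : IsCompact X) (hXconv : Convex ℝ X)
    (D : ℝ) (hD : D = Metric.diam X)
    (f g : ℕ → EuclideanSpace ℝ (Fin d) → ℝ)
    (hfconv : ∀ t ∈ Finset.Icc 1 T, ConvexOn ℝ Set.univ (f t))
    (hgconv : ∀ t ∈ Finset.Icc 1 T, ConvexOn ℝ Set.univ (g t))
    (Φ Φ' : ℝ → ℝ)
    (hΦconv : ConvexOn ℝ (Set.Ici 0) Φ)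
    (hΦmono : MonotoneOn Φ (Set.Ici 0))
    (hΦderiv : ∀ v ∈ Set.Ici (0:ℝ), HasDerivAt Φ (Φ' v) v)
    (hΦ'nonneg : ∀ v ∈ Set.Ici (0:ℝ), 0 ≤ Φ' v)
    (hΦ0 : Φ 0 = 0)
    (hΦnonneg : ∀ v ∈ Set.Ici (0:ℝ), 0 ≤ Φ v)
    -- decisions and subgradients
    (x u : ℕ → EuclideanSpace ℝ (Fin d))
    (hx : ∀ t ∈ Finset.Icc 1 T, x t ∈ X)
    -- cumulative violation and surrogate losses
    (V : ℕ → ℝ)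
    (hV : ∀ t, V t = ∑ τ ∈ Finset.Icc 1 t, max (g τ (x τ)) 0)
    (L : ℕ → EuclideanSpace ℝ (Fin d) → ℝ)
    (hL : ∀ t y, L t y = f t y + Φ' (V t) * max (g t y) 0)
    -- u t is a subgradient of L t at x t
    (hsub : ∀ t ∈ Finset.Icc 1 T, ∀ y,
      L t y ≥ L t (x t) + (inner ℝ (u t) (y - x t) : ℝ))
    -- step sizes
    (δ η : ℕ → ℝ)
    (hδ : ∀ t, δ t = 1 + ∑ τ ∈ Finset.Icc 1 t, ‖u τ‖ ^ 2)
    (hη : ∀ t, η t = D / (Real.sqrt 2 * Real.sqrt (δ t)))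
    -- projected gradient update
    (hupdate : ∀ t ∈ Finset.Icc 1 (T - 1), ∀ y ∈ X,
      ‖x (t+1) - (x t - η t • u t)‖ ≤ ‖y - (x t - η t • u t)‖)
    -- memory length and memory-dependent functions
    (m : ℕ) (hm : 1 ≤ m) (hTm : m + 1 ≤ T)
    (Lc : ℝ)
    (h : ℕ → (Fin (m + 1) → EuclideanSpace ℝ (Fin d)) → ℝ)
    -- each h t is Lc-Lipschitz w.r.t. the Euclidean norm on the product
    (hhLip : ∀ t ∈ Finset.Icc (m + 1) T, ∀ z w : Fin (m + 1) → EuclideanSpace ℝ (Fin d),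
      |h t z - h t w| ≤ Lc * Real.sqrt (∑ i, ‖z i - w i‖ ^ 2)) :
    ∑ t ∈ Finset.Icc (m + 1) T,
        |h t (fun i => x (t - m + (i : ℕ))) - h t (fun _ => x t)|
      ≤ (m : ℝ) ^ ((3:ℝ)/2) * Lc * (D / Real.sqrt 2)
          * Real.sqrt (T * Real.log (1 + ∑ t ∈ Finset.Icc 1 T, ‖u t‖ ^ 2)) := by
  have hD0 : 0 ≤ D := hD ▸ Metric.diam_nonneg
  have hδpos : ∀ s, 0 < δ s := fun s => by rw [hδ]; positivity
  have hηnn : ∀ s, 0 ≤ η s := fun s => by rw [hη]; positivity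
  set c : ℕ → ℝ := fun s => ‖x (s+1) - x s‖ with hcdef
  have hcnn : ∀ s, 0 ≤ c s := fun s => norm_nonneg _
  -- Lc nonneg
  have hLc : 0 ≤ Lc := by
    have hmem : m + 1 ∈ Finset.Icc (m+1) T := Finset.mem_Icc.mpr ⟨le_refl _, hTm⟩
    set v : EuclideanSpace ℝ (Fin d) := EuclideanSpace.single (⟨0, hd⟩ : Fin d) (1:ℝ) with hv
    have h1 := hhLip (m+1) hmem (fun _ => v) (fun _ => 0)
    have h2 : ∑ _i : Fin (m+1), ‖v - (0:EuclideanSpace ℝ (Fin d))‖ ^ 2 = (m:ℝ) + 1 := by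
      simp [hv, EuclideanSpace.norm_single]
    rw [show (∑ i : Fin (m+1), ‖(fun _ => v) i - (fun _ => (0:EuclideanSpace ℝ (Fin d))) i‖ ^ 2)
        = ((m:ℝ) + 1) from h2] at h1
    nlinarith [abs_nonneg (h (m+1) (fun _ => v) - h (m+1) (fun _ => (0:EuclideanSpace ℝ (Fin d)))),
      Real.sqrt_pos.mpr (show (0:ℝ) < (m:ℝ) + 1 by positivity), h1,
      Real.sqrt_nonneg ((m:ℝ)+1)]
  -- step bound
  have hstep : ∀ s ∈ Finset.Icc 1 (T-1), c s ≤ η s * ‖u s‖ := by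
    intro s hs
    obtain ⟨hs1, hs2⟩ := Finset.mem_Icc.mp hs
    have hxs : x s ∈ X := hx s (Finset.mem_Icc.mpr ⟨hs1, by omega⟩)
    have hxs1 : x (s+1) ∈ X := hx (s+1) (Finset.mem_Icc.mpr ⟨by omega, by omega⟩)
    have hps := proj_step hXconv hxs1 hxs (fun y hy => hupdate s hs y hy)
    have heq : ‖(x s - η s • u s) - x s‖ = η s * ‖u s‖ := by
      rw [show (x s - η s • u s) - x s = -(η s • u s) by abel, norm_neg, norm_smul,
        Real.norm_eq_abs, abs_of_nonneg (hηnn s)]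
    exact heq ▸ hps
  -- log bound
  have hlog := log_sum_bound (fun s => ‖u s‖) δ hδ
  -- per-term quantities
  set St : ℕ → ℝ := fun t => ∑ s ∈ Finset.Ico (t-m) t, c s with hStdef
  have hStnn : ∀ t, 0 ≤ St t := fun t => Finset.sum_nonneg fun s _ => hcnn s
  -- per term bound
  have hterm : ∀ t ∈ Finset.Icc (m+1) T,
      |h t (fun i => x (t - m + (i : ℕ))) - h t (fun _ => x t)|
        ≤ Lc * (Real.sqrt m * St t) := by
    intro t ht
    obtain ⟨ht1, ht2⟩ := Finset.mem_Icc.mp ht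
    have hcoord : ∀ j : ℕ, j ≤ m → ‖x (t - m + j) - x t‖ ≤ St t := by
      intro j hj
      have hk : (t - m + j) + (t - (t - m + j)) = t := by omega
      have htel := telescope_norm x (t - m + j) (t - (t - m + j))
      rw [hk] at htel
      refine htel.trans (Finset.sum_le_sum_of_subset_of_nonneg ?_ (fun s _ _ => hcnn s))
      exact Finset.Ico_subset_Ico (by omega) le_rfl
    have hsumsq : ∑ i : Fin (m+1), ‖x (t - m + (i:ℕ)) - x t‖ ^ 2 ≤ (m:ℝ) * St t ^ 2 := by
      rw [Fin.sum_univ_castSucc]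
      have hlast : t - m + ((Fin.last m : Fin (m+1)) : ℕ) = t := by
        rw [Fin.val_last]; omega
      rw [hlast, sub_self, norm_zero]
      have hsum' : (∑ i : Fin m, ‖x (t - m + ((i.castSucc : Fin (m+1)) : ℕ)) - x t‖ ^ 2)
          ≤ ∑ _i : Fin m, St t ^ 2 := by
        refine Finset.sum_le_sum fun i _ => ?_
        rw [Fin.coe_castSucc]
        exact pow_le_pow_left₀ (norm_nonneg _) (hcoord i (le_of_lt i.isLt)) 2
      calc (∑ i : Fin m, ‖x (t - m + ((i.castSucc : Fin (m+1)) : ℕ)) - x t‖ ^ 2) + 0 ^ 2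
          ≤ (∑ _i : Fin m, St t ^ 2) + 0 ^ 2 := add_le_add hsum' le_rfl
        _ = (m:ℝ) * St t ^ 2 := by simp [Finset.sum_const, mul_comm]
    refine (hhLip t ht _ _).trans ?_
    apply mul_le_mul_of_nonneg_left _ hLc
    calc Real.sqrt (∑ i : Fin (m+1), ‖x (t - m + (i:ℕ)) - x t‖ ^ 2)
        ≤ Real.sqrt ((m:ℝ) * St t ^ 2) := Real.sqrt_le_sqrt hsumsq
      _ = Real.sqrt m * St t := by
          rw [Real.sqrt_mul (by positivity), Real.sqrt_sq (hStnn t)]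
  -- sum over t
  have hmain1 : ∑ t ∈ Finset.Icc (m+1) T,
      |h t (fun i => x (t - m + (i : ℕ))) - h t (fun _ => x t)|
        ≤ Lc * Real.sqrt m * ∑ t ∈ Finset.Icc (m+1) T, St t := by
    rw [Finset.mul_sum]
    refine Finset.sum_le_sum fun t ht => (hterm t ht).trans_eq (by ring)
  -- swap double sum
  have hswap : ∑ t ∈ Finset.Icc (m+1) T, St t ≤ (m:ℝ) * ∑ s ∈ Finset.Icc 1 (T-1), c s := by
    have hrw : ∀ t ∈ Finset.Icc (m+1) T,
        St t = ∑ s ∈ Finset.Icc 1 (T-1), if s ∈ Finset.Ico (t-m) t then c s else 0 := by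
      intro t ht
      obtain ⟨ht1, ht2⟩ := Finset.mem_Icc.mp ht
      rw [Finset.sum_ite_mem, Finset.inter_eq_right.mpr]
      intro s hs
      obtain ⟨h1, h2⟩ := Finset.mem_Ico.mp hs
      exact Finset.mem_Icc.mpr ⟨by omega, by omega⟩
    rw [Finset.sum_congr rfl hrw, Finset.sum_comm]
    have hinner : ∀ s ∈ Finset.Icc 1 (T-1),
        (∑ t ∈ Finset.Icc (m+1) T, if s ∈ Finset.Ico (t-m) t then c s else 0) ≤ (m:ℝ) * c s := by
      intro s hs
      rw [← Finset.sum_filter]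
      rw [Finset.sum_const]
      have hsub2 : (Finset.Icc (m+1) T).filter (fun t => s ∈ Finset.Ico (t-m) t)
          ⊆ Finset.Icc (s+1) (s+m) := by
        intro t htmem
        obtain ⟨htI, hts⟩ := Finset.mem_filter.mp htmem
        obtain ⟨h1, h2⟩ := Finset.mem_Ico.mp hts
        obtain ⟨h3, _⟩ := Finset.mem_Icc.mp htI
        exact Finset.mem_Icc.mpr ⟨by omega, by omega⟩
      have hcard : ((Finset.Icc (m+1) T).filter (fun t => s ∈ Finset.Ico (t-m) t)).card ≤ m := by
        refine le_trans (Finset.card_le_card hsub2) ?_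
        rw [Nat.card_Icc]; omega
      rw [nsmul_eq_mul]
      exact mul_le_mul_of_nonneg_right (by exact_mod_cast hcard) (hcnn s)
    calc ∑ s ∈ Finset.Icc 1 (T-1), ∑ t ∈ Finset.Icc (m+1) T, (if s ∈ Finset.Ico (t-m) t then c s else 0)
        ≤ ∑ s ∈ Finset.Icc 1 (T-1), (m:ℝ) * c s := Finset.sum_le_sum hinner
      _ = (m:ℝ) * ∑ s ∈ Finset.Icc 1 (T-1), c s := by rw [Finset.mul_sum]
  -- step sum
  set SB : ℝ := ∑ s ∈ Finset.Icc 1 (T-1), ‖u s‖ / Real.sqrt (δ s) with hSBdef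
  have hsum2 : ∑ s ∈ Finset.Icc 1 (T-1), c s ≤ (D / Real.sqrt 2) * SB := by
    rw [hSBdef, Finset.mul_sum]
    refine Finset.sum_le_sum fun s hs => (hstep s hs).trans_eq ?_
    have h2 : Real.sqrt 2 ≠ 0 := by positivity
    have hds : Real.sqrt (δ s) ≠ 0 := ne_of_gt (Real.sqrt_pos.mpr (hδpos s))
    rw [hη]
    field_simp
  -- Cauchy-Schwarz
  have hG0 : 0 ≤ Real.log (δ T) := Real.log_nonneg (by
    rw [hδ]
    have : 0 ≤ ∑ τ ∈ Finset.Icc 1 T, ‖u τ‖ ^ 2 := Finset.sum_nonneg fun τ _ => sq_nonneg _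
    linarith)
  have hSBnn : 0 ≤ SB := Finset.sum_nonneg fun s _ => by positivity
  have hSB : SB ≤ Real.sqrt (T * Real.log (δ T)) := by
    have hcs := Finset.sum_mul_sq_le_sq_mul_sq (Finset.Icc 1 (T-1)) (fun _ => (1:ℝ))
      (fun s => ‖u s‖ / Real.sqrt (δ s))
    simp only [one_mul, one_pow] at hcs
    have hb2 : ∑ s ∈ Finset.Icc 1 (T-1), (‖u s‖ / Real.sqrt (δ s)) ^ 2
        = ∑ s ∈ Finset.Icc 1 (T-1), ‖u s‖ ^ 2 / δ s := by
      refine Finset.sum_congr rfl fun s _ => ?_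
      rw [div_pow, Real.sq_sqrt (hδpos s).le]
    have hdivle : ∑ s ∈ Finset.Icc 1 (T-1), ‖u s‖ ^ 2 / δ s ≤ Real.log (δ T) := by
      refine le_trans (Finset.sum_le_sum_of_subset_of_nonneg
        (Finset.Icc_subset_Icc_right (by omega)) (fun s _ _ => div_nonneg (sq_nonneg _) (hδpos s).le)) (hlog T)
    have hcardle : ((Finset.Icc 1 (T-1)).card : ℝ) ≤ (T:ℝ) := by
      rw [Nat.card_Icc]; exact_mod_cast Nat.le_of_lt_succ (by omega)
    have hsq : SB ^ 2 ≤ (T:ℝ) * Real.log (δ T) := by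
      rw [Finset.sum_const] at hcs
      calc SB ^ 2 ≤ ((Finset.Icc 1 (T-1)).card : ℝ) * ∑ s ∈ Finset.Icc 1 (T-1), (‖u s‖ / Real.sqrt (δ s)) ^ 2 := by
            simpa [nsmul_eq_mul] using hcs
        _ ≤ (T:ℝ) * Real.log (δ T) := by
            rw [hb2]
            exact mul_le_mul hcardle hdivle (Finset.sum_nonneg fun s _ => div_nonneg (sq_nonneg _) (hδpos s).le) (by positivity)
    calc SB = Real.sqrt (SB ^ 2) := (Real.sqrt_sq hSBnn).symm
      _ ≤ Real.sqrt ((T:ℝ) * Real.log (δ T)) := Real.sqrt_le_sqrt hsq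
  -- final
  have hm32 : (m:ℝ) ^ ((3:ℝ)/2) = (m:ℝ) * Real.sqrt m := by
    rw [Real.sqrt_eq_rpow, show (3:ℝ)/2 = 1 + 1/2 by norm_num,
      Real.rpow_add (by exact_mod_cast Nat.lt_of_lt_of_le Nat.zero_lt_one hm : (0:ℝ) < m), Real.rpow_one]
  have hrwlog : (1 + ∑ t ∈ Finset.Icc 1 T, ‖u t‖ ^ 2) = δ T := (hδ T).symm
  rw [hrwlog, hm32]
  have hchain : Lc * Real.sqrt m * ∑ t ∈ Finset.Icc (m+1) T, St t
      ≤ Lc * Real.sqrt m * ((m:ℝ) * ((D / Real.sqrt 2) * Real.sqrt (T * Real.log (δ T)))) := by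
    have h1 : (0:ℝ) ≤ Lc * Real.sqrt m := mul_nonneg hLc (Real.sqrt_nonneg _)
    refine mul_le_mul_of_nonneg_left ?_ h1
    refine hswap.trans ?_
    refine mul_le_mul_of_nonneg_left ?_ (by positivity)
    refine hsum2.trans ?_
    exact mul_le_mul_of_nonneg_left hSB (by positivity)
  calc ∑ t ∈ Finset.Icc (m+1) T, |h t (fun i => x (t - m + (i : ℕ))) - h t (fun _ => x t)|
      ≤ Lc * Real.sqrt m * ∑ t ∈ Finset.Icc (m+1) T, St t := hmain1
    _ ≤ Lc * Real.sqrt m * ((m:ℝ) * ((D / Real.sqrt 2) * Real.sqrt (T * Real.log (δ T)))) := hchain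
    _ = (m:ℝ) * Real.sqrt m * Lc * (D / Real.sqrt 2) * Real.sqrt (T * Real.log (δ T)) := by ring
end

section
/- Explicit cumulative-violation bound for the exponential penalty: if D > 0, L_g > 0, 0 < λ ≤ 1/(2·√(2T)·D·L_g), |f̂_t(x)| ≤ F for all x ∈ X and all t, and there exists u ∈ X with ĝ_t(u) ≤ 0 for all t ∈ {1,…,T}, then the adaptive OGD iterates with penalty Φ(v) := exp(λv) − 1 satisfy V̂_T ≤ (1/λ)·log(2·(1 + √2·D + √(2T)·D·L_f + 2·F·T)). -/
open Real Finset

example (a b c : ℝ) : |max a c - max b c| ≤ |a - b| := abs_max_sub_max_le_abs a b c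

private lemma proj_dist_le_aux {E : Type*} [NormedAddCommGroup E] [InnerProductSpace ℝ E]
    {X : Set E} (hX : Convex ℝ X) {p z v : E} (hp : p ∈ X) (hv : v ∈ X)
    (hmin : ∀ y ∈ X, ‖p - z‖ ≤ ‖y - z‖) : ‖v - p‖ ≤ ‖v - z‖ := by
  have hobt : (0:ℝ) ≤ inner ℝ (p - z) (v - p) := by
    by_contra hcon
    push_neg at hcon
    set c : ℝ := inner ℝ (p - z) (v - p) with hc
    have hB : (0:ℝ) < ‖v - p‖^2 := by
      rcases eq_or_ne v p with h | h
      · exfalso; rw [hc, h] at hcon; simp at hcon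
      · have h2 : 0 < ‖v - p‖ := norm_pos_iff.mpr (sub_ne_zero.mpr h)
        positivity
    set B := ‖v - p‖^2 with hBdef
    set s : ℝ := min 1 (-c/B) with hs
    have hs0 : 0 < s := lt_min one_pos (div_pos (neg_pos.mpr hcon) hB)
    have hs1 : s ≤ 1 := min_le_left _ _
    have hsB : s * B ≤ -c := by
      have h := min_le_right (1:ℝ) (-c/B)
      rw [← hs, le_div_iff₀ hB] at h; linarith
    have hyX : p + s • (v - p) ∈ X := by
      have h := hX hp hv (by linarith : (0:ℝ) ≤ 1 - s) hs0.le (by ring)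
      convert h using 1
      module
    have hymin := hmin _ hyX
    have hsq : ‖p + s • (v - p) - z‖^2 = ‖p - z‖^2 + 2*s*c + s^2*B := by
      have h1 : p + s • (v - p) - z = (p - z) + s • (v - p) := by abel
      rw [h1, norm_add_sq_real, real_inner_smul_right, norm_smul]
      rw [mul_pow, Real.norm_eq_abs, sq_abs, ← hc, ← hBdef]
      ring
    have hsq2 : ‖p - z‖^2 ≤ ‖p + s • (v - p) - z‖^2 :=
      pow_le_pow_left₀ (norm_nonneg _) hymin 2
    nlinarith
  have hexp : ‖v - z‖^2 = ‖v - p‖^2 + 2*inner ℝ (v - p) (p - z) + ‖p - z‖^2 := by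
    have h1 : v - z = (v - p) + (p - z) := by abel
    rw [h1, norm_add_sq_real]
  have h2 : ‖v - p‖^2 ≤ ‖v - z‖^2 := by
    rw [real_inner_comm] at hexp
    nlinarith [sq_nonneg ‖p - z‖]
  nlinarith [norm_nonneg (v - p), norm_nonneg (v - z)]

private lemma ratio_le_sqrt_diff {a b : ℝ} (ha : 0 ≤ a) (hab : a ≤ b) (hb : 0 < b) :
    (b - a) / Real.sqrt b ≤ 2 * (Real.sqrt b - Real.sqrt a) := by
  have hsb : 0 < Real.sqrt b := Real.sqrt_pos.mpr hb
  rw [div_le_iff₀ hsb]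
  have h1 : Real.sqrt a ≤ Real.sqrt b := Real.sqrt_le_sqrt hab
  nlinarith [Real.sq_sqrt ha, Real.sq_sqrt hb.le, Real.sqrt_nonneg a,
    sq_nonneg (Real.sqrt b - Real.sqrt a)]

private lemma sqrt_add_le' {a b : ℝ} (ha : 0 ≤ a) (hb : 0 ≤ b) :
    Real.sqrt (a + b) ≤ Real.sqrt a + Real.sqrt b := by
  have h : a + b ≤ (Real.sqrt a + Real.sqrt b)^2 := by
    nlinarith [Real.sq_sqrt ha, Real.sq_sqrt hb, Real.sqrt_nonneg a, Real.sqrt_nonneg b]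
  calc Real.sqrt (a+b) ≤ Real.sqrt ((Real.sqrt a + Real.sqrt b)^2) := Real.sqrt_le_sqrt h
    _ = Real.sqrt a + Real.sqrt b := Real.sqrt_sq (by positivity)



set_option maxHeartbeats 2000000

/-- Explicit cumulative-violation bound for the exponential
penalty `Φ(v) = exp(λv) − 1` with `0 < λ ≤ 1/(2·√(2T)·D·L_g)`:
`V̂_T ≤ (1/λ)·log(2·(1 + √2·D + √(2T)·D·L_f + 2·F·T))`. -/
theorem exponential_penalty_ogd_ccv
    (d T : ℕ) (hd : 0 < d) (hT : 0 < T)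
    (X : Set (EuclideanSpace ℝ (Fin d)))
    (hXne : X.Nonempty) (hXcpt : IsCompact X) (hXconv : Convex ℝ X)
    (D : ℝ) (hD : D = Metric.diam X) (hDpos : 0 < D)
    (Lf Lg F : ℝ) (hLg : 0 < Lg)
    (lam : ℝ) (hlam : 0 < lam)
    (hlam' : lam ≤ 1 / (2 * Real.sqrt (2 * T) * D * Lg))
    (f g : ℕ → EuclideanSpace ℝ (Fin d) → ℝ)
    (hfconv : ∀ t ∈ Finset.Icc 1 T, ConvexOn ℝ Set.univ (f t))
    (hgconv : ∀ t ∈ Finset.Icc 1 T, ConvexOn ℝ Set.univ (g t))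
    (hfLip : ∀ t ∈ Finset.Icc 1 T, ∀ x y, |f t x - f t y| ≤ Lf * ‖x - y‖)
    (hgLip : ∀ t ∈ Finset.Icc 1 T, ∀ x y, |g t x - g t y| ≤ Lg * ‖x - y‖)
    (hfbd : ∀ t ∈ Finset.Icc 1 T, ∀ x ∈ X, |f t x| ≤ F)
    -- decisions and subgradients
    (x u : ℕ → EuclideanSpace ℝ (Fin d))
    (hx : ∀ t ∈ Finset.Icc 1 T, x t ∈ X)
    -- cumulative violation and surrogate losses with exponential penalty
    (V : ℕ → ℝ)
    (hV : ∀ t, V t = ∑ τ ∈ Finset.Icc 1 t, max (g τ (x τ)) 0)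
    (L : ℕ → EuclideanSpace ℝ (Fin d) → ℝ)
    (hL : ∀ t y, L t y = f t y + (lam * Real.exp (lam * V t)) * max (g t y) 0)
    -- u t is a subgradient of L t at x t
    (hsub : ∀ t ∈ Finset.Icc 1 T, ∀ y,
      L t y ≥ L t (x t) + (inner ℝ (u t) (y - x t) : ℝ))
    -- step sizes
    (δ η : ℕ → ℝ)
    (hδ : ∀ t, δ t = 1 + ∑ τ ∈ Finset.Icc 1 t, ‖u τ‖ ^ 2)
    (hη : ∀ t, η t = D / (Real.sqrt 2 * Real.sqrt (δ t)))
    -- projected gradient update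
    (hupdate : ∀ t ∈ Finset.Icc 1 (T - 1), ∀ y ∈ X,
      ‖x (t+1) - (x t - η t • u t)‖ ≤ ‖y - (x t - η t • u t)‖)
    -- a feasible point exists
    (hfeas : ∃ v ∈ X, ∀ t ∈ Finset.Icc 1 T, g t v ≤ 0) :
    V T ≤ (1 / lam) * Real.log (2 * (1 + Real.sqrt 2 * D
        + Real.sqrt (2 * T) * D * Lf + 2 * F * T)) := by
  classical
  obtain ⟨v, hvX, hgv⟩ := hfeas
  have hT1 : (1:ℕ) ∈ Finset.Icc 1 T := by simp [Finset.mem_Icc]; omega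
  -- basic positivity facts
  have hLf0 : 0 ≤ Lf := by
    have h2 := hfLip 1 hT1 0 (EuclideanSpace.single ⟨0, hd⟩ (1:ℝ))
    have hnorm : ‖(0 : EuclideanSpace ℝ (Fin d)) - EuclideanSpace.single ⟨0,hd⟩ (1:ℝ)‖ = 1 := by
      rw [zero_sub, norm_neg, EuclideanSpace.norm_single]; norm_num
    rw [hnorm, mul_one] at h2
    exact le_trans (abs_nonneg _) h2
  have hF0 : 0 ≤ F := by
    obtain ⟨x0, hx0⟩ := hXne
    exact le_trans (abs_nonneg _) (hfbd 1 hT1 x0 hx0)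
  -- δ and η facts
  have hδsucc : ∀ t : ℕ, δ (t+1) = δ t + ‖u (t+1)‖^2 := by
    intro t; rw [hδ, hδ, Finset.sum_Icc_succ_top (by omega : 1 ≤ t+1)]; ring
  have hδ1 : ∀ t, 1 ≤ δ t := by
    intro t; rw [hδ]
    have h : (0:ℝ) ≤ ∑ τ ∈ Finset.Icc 1 t, ‖u τ‖ ^ 2 :=
      Finset.sum_nonneg fun i _ => by positivity
    linarith
  have hδpos : ∀ t, 0 < δ t := fun t => lt_of_lt_of_le one_pos (hδ1 t)
  have hE1 : ∀ t, 1 ≤ Real.sqrt (δ t) := by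
    intro t; rw [show (1:ℝ) = Real.sqrt 1 by simp]
    exact Real.sqrt_le_sqrt (hδ1 t)
  have hEpos : ∀ t, 0 < Real.sqrt (δ t) := fun t => lt_of_lt_of_le one_pos (hE1 t)
  have hs2 : (0:ℝ) < Real.sqrt 2 := Real.sqrt_pos.mpr (by norm_num)
  have hs2sq : Real.sqrt 2 * Real.sqrt 2 = 2 := Real.mul_self_sqrt (by norm_num)
  have hηpos : ∀ t, 0 < η t := by
    intro t; rw [hη]; exact div_pos hDpos (mul_pos hs2 (hEpos t))
  have hδmono : ∀ t, δ t ≤ δ (t+1) := by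
    intro t; rw [hδsucc]; nlinarith [sq_nonneg ‖u (t+1)‖]
  have hηanti : ∀ t, η (t+1) ≤ η t := by
    intro t; rw [hη, hη]
    exact div_le_div_of_nonneg_left hDpos.le (mul_pos hs2 (hEpos t))
      (mul_le_mul_of_nonneg_left (Real.sqrt_le_sqrt (hδmono t)) hs2.le)
  -- V facts
  have hV0 : V 0 = 0 := by rw [hV]; simp
  have hVsucc : ∀ t : ℕ, V (t+1) = V t + max (g (t+1) (x (t+1))) 0 := by
    intro t; rw [hV, hV, Finset.sum_Icc_succ_top (by omega : 1 ≤ t+1)]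
  have hVmono : Monotone V := monotone_nat_of_le_succ (by
    intro t; rw [hVsucc]; nlinarith [le_max_right (g (t+1) (x (t+1))) (0:ℝ)])
  -- distance bound
  have hbD : ∀ t ∈ Finset.Icc 1 T, ‖x t - v‖^2 ≤ D^2 := by
    intro t ht
    have h1 : dist (x t) v ≤ Metric.diam X :=
      Metric.dist_le_diam_of_mem hXcpt.isBounded (hx t ht) hvX
    rw [dist_eq_norm, ← hD] at h1
    exact pow_le_pow_left₀ (norm_nonneg _) h1 2
  -- expansion of the pre-projection point
  have hexpand : ∀ t, ‖(x t - η t • u t) - v‖^2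
      = ‖x t - v‖^2 - 2 * η t * (inner ℝ (u t) (x t - v) : ℝ) + (η t)^2 * ‖u t‖^2 := by
    intro t
    have h1 : (x t - η t • u t) - v = (x t - v) - η t • u t := by abel
    rw [h1, norm_sub_sq_real, real_inner_smul_right, norm_smul,
      real_inner_comm, Real.norm_eq_abs, mul_pow, sq_abs]
    ring
  -- per-step inequality
  have hstep : ∀ t, 1 ≤ t → t ≤ T →
      (inner ℝ (u t) (x t - v) : ℝ) ≤
        (‖x t - v‖^2 - (if t < T then ‖x (t+1) - v‖^2 else 0)) / (2 * η t)
          + η t * ‖u t‖^2 / 2 := by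
    intro t ht1 htT
    have h2η : 0 < 2 * η t := by linarith [hηpos t]
    have hc : (if t < T then ‖x (t+1) - v‖^2 else 0)
        ≤ ‖x t - v‖^2 - 2 * η t * (inner ℝ (u t) (x t - v) : ℝ) + (η t)^2 * ‖u t‖^2 := by
      rw [← hexpand]
      by_cases hlt : t < T
      · rw [if_pos hlt]
        have hmem : t ∈ Finset.Icc 1 (T-1) := by simp [Finset.mem_Icc]; omega
        have hproj : ‖v - x (t+1)‖ ≤ ‖v - (x t - η t • u t)‖ := by
          refine proj_dist_le_aux hXconv ?_ hvX (fun y hy => hupdate t hmem y hy)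
          exact hx (t+1) (by simp [Finset.mem_Icc]; omega)
        have := pow_le_pow_left₀ (norm_nonneg _) hproj 2
        rwa [norm_sub_rev v, norm_sub_rev v] at this
      · rw [if_neg hlt]; positivity
    rw [← sub_le_iff_le_add, le_div_iff₀ h2η]
    nlinarith [hc]
  -- regret induction
  have hreg : ∀ n, 1 ≤ n → n ≤ T →
      (∑ t ∈ Finset.Icc 1 n, (inner ℝ (u t) (x t - v) : ℝ)) ≤
        (D^2 - (if n < T then ‖x (n+1) - v‖^2 else 0)) / (2 * η n)
          + ∑ t ∈ Finset.Icc 1 n, η t * ‖u t‖^2 / 2 := by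
    intro n hn
    induction n, hn using Nat.le_induction with
    | base =>
      intro h1T
      rw [show Finset.Icc 1 1 = {1} by rfl, Finset.sum_singleton, Finset.sum_singleton]
      have h := hstep 1 le_rfl h1T
      have h2η : 0 < 2 * η 1 := by linarith [hηpos 1]
      have hb := hbD 1 hT1
      have hr : (0:ℝ) ≤ (if 1 < T then ‖x 2 - v‖^2 else 0) := by
        by_cases hlt : 1 < T
        · rw [if_pos hlt]; positivity
        · rw [if_neg hlt]
      refine h.trans ?_
      gcongr
    | succ n hn ih =>
      intro hsT
      have hnT : n < T := by omega
      have ihh := ih (by omega)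
      rw [if_pos hnT] at ihh
      rw [Finset.sum_Icc_succ_top (by omega : 1 ≤ n+1),
        Finset.sum_Icc_succ_top (by omega : 1 ≤ n+1)]
      have hst := hstep (n+1) (by omega) hsT
      have h2ηn : 0 < 2 * η n := by linarith [hηpos n]
      have h2ηn1 : 0 < 2 * η (n+1) := by linarith [hηpos (n+1)]
      have hb1 : ‖x (n+1) - v‖^2 ≤ D^2 := hbD (n+1) (by simp [Finset.mem_Icc]; omega)
      have hmono : (D^2 - ‖x (n+1) - v‖^2) / (2 * η n)
          ≤ (D^2 - ‖x (n+1) - v‖^2) / (2 * η (n+1)) := by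
        apply div_le_div_of_nonneg_left (by linarith) h2ηn1
        linarith [hηanti n]
      calc ∑ t ∈ Finset.Icc 1 n, (inner ℝ (u t) (x t - v) : ℝ) + (inner ℝ (u (n+1)) (x (n+1) - v) : ℝ)
          ≤ ((D^2 - ‖x (n+1) - v‖^2) / (2 * η n) + ∑ t ∈ Finset.Icc 1 n, η t * ‖u t‖^2 / 2)
            + ((‖x (n+1) - v‖^2 - (if n+1 < T then ‖x (n+2) - v‖^2 else 0)) / (2 * η (n+1))
              + η (n+1) * ‖u (n+1)‖^2 / 2) := by
            exact add_le_add ihh hst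
        _ ≤ (D^2 - (if n+1 < T then ‖x (n+2) - v‖^2 else 0)) / (2 * η (n+1))
            + (∑ t ∈ Finset.Icc 1 n, η t * ‖u t‖^2 / 2 + η (n+1) * ‖u (n+1)‖^2 / 2) := by
            have heq : (D^2 - ‖x (n+1) - v‖^2) / (2 * η (n+1))
                + (‖x (n+1) - v‖^2 - (if n+1 < T then ‖x (n+2) - v‖^2 else 0)) / (2 * η (n+1))
                = (D^2 - (if n+1 < T then ‖x (n+2) - v‖^2 else 0)) / (2 * η (n+1)) := by
              rw [← add_div]; ring_nf
            linarith [hmono]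
        _ = _ := by ring
  -- telescoped step-size sum
  have hsum_u : ∀ n : ℕ, (∑ t ∈ Finset.Icc 1 n, η t * ‖u t‖^2)
      ≤ (2 * D / Real.sqrt 2) * (Real.sqrt (δ n) - 1) := by
    intro n
    induction n with
    | zero => simp [hδ]
    | succ n ih =>
      rw [Finset.sum_Icc_succ_top (by omega : 1 ≤ n+1)]
      have hterm : η (n+1) * ‖u (n+1)‖^2
          ≤ (2 * D / Real.sqrt 2) * (Real.sqrt (δ (n+1)) - Real.sqrt (δ n)) := by
        have h1 : ‖u (n+1)‖^2 = δ (n+1) - δ n := by rw [hδsucc]; ring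
        rw [hη, h1]
        have h2 := ratio_le_sqrt_diff (hδpos n).le (hδmono n) (hδpos (n+1))
        have e : D / (Real.sqrt 2 * Real.sqrt (δ (n+1))) * (δ (n+1) - δ n)
            = (D / Real.sqrt 2) * ((δ (n+1) - δ n) / Real.sqrt (δ (n+1))) := by
          field_simp
        have e2 : (2 * D / Real.sqrt 2) * (Real.sqrt (δ (n+1)) - Real.sqrt (δ n))
            = (D / Real.sqrt 2) * (2 * (Real.sqrt (δ (n+1)) - Real.sqrt (δ n))) := by
          ring
        rw [e, e2]
        exact mul_le_mul_of_nonneg_left h2 (by positivity)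
      calc (∑ t ∈ Finset.Icc 1 n, η t * ‖u t‖^2) + η (n+1) * ‖u (n+1)‖^2
          ≤ (2 * D / Real.sqrt 2) * (Real.sqrt (δ n) - 1)
            + (2 * D / Real.sqrt 2) * (Real.sqrt (δ (n+1)) - Real.sqrt (δ n)) :=
            add_le_add ih hterm
        _ = (2 * D / Real.sqrt 2) * (Real.sqrt (δ (n+1)) - 1) := by ring
  -- total regret bound
  have hST : (∑ t ∈ Finset.Icc 1 T, (inner ℝ (u t) (x t - v) : ℝ))
      ≤ Real.sqrt 2 * D * Real.sqrt (δ T) := by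
    have h := hreg T hT le_rfl
    rw [if_neg (lt_irrefl T)] at h
    have hη_eq : (D^2 - 0) / (2 * η T) = D * Real.sqrt 2 * Real.sqrt (δ T) / 2 := by
      rw [hη]
      field_simp
      ring
    rw [hη_eq] at h
    have h2 : (∑ t ∈ Finset.Icc 1 T, η t * ‖u t‖^2 / 2)
        ≤ (D / Real.sqrt 2) * (Real.sqrt (δ T) - 1) := by
      have h3 := hsum_u T
      have h4 : (∑ t ∈ Finset.Icc 1 T, η t * ‖u t‖^2 / 2)
          = (∑ t ∈ Finset.Icc 1 T, η t * ‖u t‖^2) / 2 := by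
        rw [Finset.sum_div]
      rw [h4]
      have e3 : (2 * D / Real.sqrt 2) * (Real.sqrt (δ T) - 1)
          = 2 * ((D / Real.sqrt 2) * (Real.sqrt (δ T) - 1)) := by ring
      rw [e3] at h3
      linarith
    have hE := hE1 T
    have e4 : D / Real.sqrt 2 = D * Real.sqrt 2 / 2 := by
      field_simp
      nlinarith [hs2sq]
    have key : D * Real.sqrt 2 * Real.sqrt (δ T) / 2 + (D / Real.sqrt 2) * (Real.sqrt (δ T) - 1)
        ≤ Real.sqrt 2 * D * Real.sqrt (δ T) := by
      rw [e4]
      nlinarith [mul_pos hDpos hs2, hE]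
    linarith
  -- subgradient norm bound
  have hP0 : 0 < lam * Real.exp (lam * V T) := by positivity
  have hub : ∀ t ∈ Finset.Icc 1 T, ‖u t‖ ≤ Lf + (lam * Real.exp (lam * V T)) * Lg := by
    intro t ht
    have htT : t ≤ T := (Finset.mem_Icc.mp ht).2
    have hρt0 : 0 < lam * Real.exp (lam * V t) := by positivity
    have hρtP : lam * Real.exp (lam * V t) ≤ lam * Real.exp (lam * V T) := by
      have := hVmono htT
      gcongr
    have h1 := hsub t ht (x t + u t)
    have h2 : (inner ℝ (u t) (x t + u t - x t) : ℝ) = ‖u t‖^2 := by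
      rw [add_sub_cancel_left, real_inner_self_eq_norm_sq]
    rw [h2] at h1
    have hLlip : L t (x t + u t) - L t (x t)
        ≤ (Lf + (lam * Real.exp (lam * V t)) * Lg) * ‖u t‖ := by
      rw [hL, hL]
      have hf := hfLip t ht (x t + u t) (x t)
      have hg := hgLip t ht (x t + u t) (x t)
      rw [add_sub_cancel_left] at hf hg
      have hmx : max (g t (x t + u t)) 0 - max (g t (x t)) 0 ≤ Lg * ‖u t‖ := by
        calc max (g t (x t + u t)) 0 - max (g t (x t)) 0
            ≤ |max (g t (x t + u t)) 0 - max (g t (x t)) 0| := le_abs_self _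
          _ ≤ |g t (x t + u t) - g t (x t)| := abs_max_sub_max_le_abs _ _ _
          _ ≤ Lg * ‖u t‖ := hg
      have hfx : f t (x t + u t) - f t (x t) ≤ Lf * ‖u t‖ :=
        le_trans (le_abs_self _) hf
      have h5 : (lam * Real.exp (lam * V t)) * (max (g t (x t + u t)) 0 - max (g t (x t)) 0)
          ≤ (lam * Real.exp (lam * V t)) * (Lg * ‖u t‖) :=
        mul_le_mul_of_nonneg_left hmx hρt0.le
      linarith [h5, hfx]
    have h3 : ‖u t‖^2 ≤ (Lf + (lam * Real.exp (lam * V t)) * Lg) * ‖u t‖ := by linarith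
    have hmono2 : (lam * Real.exp (lam * V t)) * Lg ≤ (lam * Real.exp (lam * V T)) * Lg :=
      mul_le_mul_of_nonneg_right hρtP hLg.le
    rcases eq_or_lt_of_le (norm_nonneg (u t)) with h0 | h0
    · rw [← h0]
      linarith [mul_pos hρt0 hLg]
    · have h4 : ‖u t‖ ≤ Lf + (lam * Real.exp (lam * V t)) * Lg := by
        by_contra hcon
        push_neg at hcon
        have h5 := mul_lt_mul_of_pos_right hcon h0
        nlinarith [h3, h5]
      linarith
  -- bound on sqrt (δ T)
  have hC0 : 0 ≤ Lf + (lam * Real.exp (lam * V T)) * Lg := by positivity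
  have hδT : δ T ≤ 1 + T * (Lf + (lam * Real.exp (lam * V T)) * Lg)^2 := by
    rw [hδ]
    have h1 : (∑ τ ∈ Finset.Icc 1 T, ‖u τ‖ ^ 2)
        ≤ ∑ τ ∈ Finset.Icc 1 T, (Lf + (lam * Real.exp (lam * V T)) * Lg)^2 := by
      apply Finset.sum_le_sum
      intro i hi
      exact pow_le_pow_left₀ (norm_nonneg _) (hub i hi) 2
    rw [Finset.sum_const, Nat.card_Icc] at h1
    simp only [Nat.add_sub_cancel, nsmul_eq_mul] at h1
    linarith
  have hET : Real.sqrt (δ T)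
      ≤ 1 + Real.sqrt T * (Lf + (lam * Real.exp (lam * V T)) * Lg) := by
    calc Real.sqrt (δ T)
        ≤ Real.sqrt (1 + T * (Lf + (lam * Real.exp (lam * V T)) * Lg)^2) :=
          Real.sqrt_le_sqrt hδT
      _ ≤ Real.sqrt 1 + Real.sqrt (T * (Lf + (lam * Real.exp (lam * V T)) * Lg)^2) :=
          sqrt_add_le' (by norm_num) (by positivity)
      _ = 1 + Real.sqrt T * (Lf + (lam * Real.exp (lam * V T)) * Lg) := by
          rw [Real.sqrt_one, Real.sqrt_mul (by positivity), Real.sqrt_sq hC0]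
  -- surrogate regret applied to feasible point
  have hsub_sum : (∑ t ∈ Finset.Icc 1 T, (lam * Real.exp (lam * V t)) * max (g t (x t)) 0)
      ≤ Real.sqrt 2 * D * Real.sqrt (δ T) + 2 * F * T := by
    have h1 : ∀ t ∈ Finset.Icc 1 T,
        (lam * Real.exp (lam * V t)) * max (g t (x t)) 0
          ≤ (inner ℝ (u t) (x t - v) : ℝ) + 2 * F := by
      intro t ht
      have h := hsub t ht v
      rw [hL, hL] at h
      have hgv0 : max (g t v) 0 = 0 := max_eq_right (hgv t ht)
      rw [hgv0, mul_zero, add_zero] at h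
      have hinner : (inner ℝ (u t) (v - x t) : ℝ) = - (inner ℝ (u t) (x t - v) : ℝ) := by
        rw [show v - x t = -(x t - v) by abel, inner_neg_right]
      rw [hinner] at h
      have hfb1 := abs_le.mp (hfbd t ht (x t) (hx t ht))
      have hfb2 := abs_le.mp (hfbd t ht v hvX)
      linarith [hfb1.1, hfb1.2, hfb2.1, hfb2.2]
    calc (∑ t ∈ Finset.Icc 1 T, (lam * Real.exp (lam * V t)) * max (g t (x t)) 0)
        ≤ ∑ t ∈ Finset.Icc 1 T, ((inner ℝ (u t) (x t - v) : ℝ) + 2 * F) :=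
          Finset.sum_le_sum h1
      _ = (∑ t ∈ Finset.Icc 1 T, (inner ℝ (u t) (x t - v) : ℝ)) + T * (2 * F) := by
          rw [Finset.sum_add_distrib, Finset.sum_const, Nat.card_Icc]
          simp only [Nat.add_sub_cancel, nsmul_eq_mul]
      _ ≤ Real.sqrt 2 * D * Real.sqrt (δ T) + 2 * F * T := by
          have := hST; linarith
  -- exponential telescoping
  have hexp : ∀ n : ℕ, Real.exp (lam * V n) - 1
      ≤ ∑ t ∈ Finset.Icc 1 n, (lam * Real.exp (lam * V t)) * max (g t (x t)) 0 := by
    intro n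
    induction n with
    | zero => simp [hV0]
    | succ n ih =>
      rw [Finset.sum_Icc_succ_top (by omega : 1 ≤ n+1)]
      have ha0 : (0:ℝ) ≤ max (g (n+1) (x (n+1))) 0 := le_max_right _ _
      have h1 : 1 - lam * max (g (n+1) (x (n+1))) 0
          ≤ Real.exp (-(lam * max (g (n+1) (x (n+1))) 0)) := by
        have := Real.add_one_le_exp (-(lam * max (g (n+1) (x (n+1))) 0))
        linarith
      have h3 : Real.exp (lam * V n)
          = Real.exp (lam * V (n+1)) * Real.exp (-(lam * max (g (n+1) (x (n+1))) 0)) := by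
        rw [← Real.exp_add, hVsucc]; ring_nf
      have h4 : Real.exp (lam * V (n+1)) * (1 - lam * max (g (n+1) (x (n+1))) 0)
          ≤ Real.exp (lam * V n) := by
        rw [h3]
        exact mul_le_mul_of_nonneg_left h1 (Real.exp_pos _).le
      have h5 : Real.exp (lam * V (n+1)) - Real.exp (lam * V n)
          ≤ (lam * Real.exp (lam * V (n+1))) * max (g (n+1) (x (n+1))) 0 := by
        nlinarith [Real.exp_pos (lam * V (n+1))]
      linarith
  -- combine everything
  have hW1 : Real.exp (lam * V T) - 1
      ≤ Real.sqrt 2 * D * Real.sqrt (δ T) + 2 * F * T :=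
    le_trans (hexp T) hsub_sum
  have hWpos : 0 < Real.exp (lam * V T) := Real.exp_pos _
  have h2T : Real.sqrt (2 * T) = Real.sqrt 2 * Real.sqrt T := Real.sqrt_mul (by norm_num) _
  have hsTpos : 0 < Real.sqrt (2 * T) := by
    apply Real.sqrt_pos.mpr
    have : (1:ℝ) ≤ (T:ℝ) := by exact_mod_cast hT
    linarith
  have hhalf : Real.sqrt (2 * T) * D * Lg * lam ≤ 1 / 2 := by
    have hpos : 0 < 2 * Real.sqrt (2 * T) * D * Lg := by positivity
    rw [le_div_iff₀ hpos] at hlam'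
    nlinarith
  have hbig : Real.exp (lam * V T)
      ≤ 1 + 2 * F * T + Real.sqrt 2 * D
        + Real.sqrt 2 * D * Real.sqrt T * Lf
        + Real.sqrt 2 * D * Real.sqrt T * ((lam * Real.exp (lam * V T)) * Lg) := by
    have h6 : Real.sqrt 2 * D * Real.sqrt (δ T)
        ≤ Real.sqrt 2 * D * (1 + Real.sqrt T * (Lf + (lam * Real.exp (lam * V T)) * Lg)) := by
      apply mul_le_mul_of_nonneg_left hET (by positivity)
    nlinarith [hW1, h6]
  have hR : Real.exp (lam * V T)
      ≤ 2 * (1 + Real.sqrt 2 * D + Real.sqrt (2 * T) * D * Lf + 2 * F * T) := by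
    have e1 : Real.sqrt 2 * D * Real.sqrt T * Lf = Real.sqrt (2 * T) * D * Lf := by
      rw [h2T]; ring
    have e2 : Real.sqrt 2 * D * Real.sqrt T * ((lam * Real.exp (lam * V T)) * Lg)
        = (Real.sqrt (2 * T) * D * Lg * lam) * Real.exp (lam * V T) := by
      rw [h2T]; ring
    rw [e1, e2] at hbig
    have h7 : (Real.sqrt (2 * T) * D * Lg * lam) * Real.exp (lam * V T)
        ≤ (1/2) * Real.exp (lam * V T) :=
      mul_le_mul_of_nonneg_right hhalf hWpos.le
    linarith
  have hRpos : 0 < 2 * (1 + Real.sqrt 2 * D + Real.sqrt (2 * T) * D * Lf + 2 * F * T) :=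
    lt_of_lt_of_le hWpos hR
  have hlog : lam * V T
      ≤ Real.log (2 * (1 + Real.sqrt 2 * D + Real.sqrt (2 * T) * D * Lf + 2 * F * T)) :=
    (Real.le_log_iff_exp_le hRpos).mpr hR
  calc V T = (lam * V T) / lam := by field_simp
    _ ≤ Real.log (2 * (1 + Real.sqrt 2 * D + Real.sqrt (2 * T) * D * Lf + 2 * F * T)) / lam := by
        gcongr
    _ = (1 / lam) * Real.log (2 * (1 + Real.sqrt 2 * D + Real.sqrt (2 * T) * D * Lf + 2 * F * T)) := by
        ring
end

section
/- Regret decomposition with delayed penalty multiplier: for every u ∈ ℝ^d with g_t(u,…,u) ≤ 0 for all t ∈ {m+1,…,T}, one has Φ(V_T) − Φ(V_m) + Σ_{t=m+1}^{T} [f_t(x_{t−m},…,x_t) − f_t(u,…,u)] ≤ Σ_{t=m+1}^{T} [L_t(x_{t−m},…,x_t) − L_t(u,…,u)] + G·(m+1)·Φ′(V_T). -/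
theorem mvt_aux (Φ Φ' : ℝ → ℝ)
    (hderiv : ∀ v ∈ Set.Ici (0:ℝ), HasDerivAt Φ (Φ' v) v)
    (hmono : MonotoneOn Φ' (Set.Ici 0))
    (a b : ℝ) (ha : 0 ≤ a) (hab : a ≤ b) :
    Φ b - Φ a ≤ Φ' b * (b - a) := by
  rcases eq_or_lt_of_le hab with h | h
  · subst h; simp
  · have hb : 0 ≤ b := le_trans ha hab
    have hcont : ContinuousOn Φ (Set.Icc a b) := fun v hv =>
      ((hderiv v (le_trans ha hv.1)).continuousAt).continuousWithinAt
    obtain ⟨c, hc, hceq⟩ := exists_hasDerivAt_eq_slope Φ Φ' h hcont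
      (fun v hv => hderiv v (le_trans ha hv.1.le))
    have hc0 : (0:ℝ) ≤ c := le_trans ha hc.1.le
    have hcb : Φ' c ≤ Φ' b := hmono hc0 hb hc.2.le
    have : Φ b - Φ a = Φ' c * (b - a) := by
      rw [hceq]; rw [div_mul_eq_mul_div, mul_div_assoc, div_self (by linarith : b - a ≠ 0), mul_one]
    rw [this]
    exact mul_le_mul_of_nonneg_right hcb (by linarith)



/-- Regret decomposition with delayed penalty multiplier: for
any comparator `u` feasible for the memoryless constraints,
`Φ(V_T) − Φ(V_m) + Σ_{t=m+1}^T [f_t(x_{t−m},…,x_t) − f_t(u,…,u)]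
  ≤ Σ_{t=m+1}^T [L_t(x_{t−m},…,x_t) − L_t(u,…,u)] + G·(m+1)·Φ′(V_T)`,
where `L_t(z) = f_t(z) + Φ′(V_{t−m−1})·g_t⁺(z)`. -/
theorem regret_decomposition_delayed_multiplier
    (d m T : ℕ) (hd : 0 < d) (hm : 0 < m) (hT : m + 1 ≤ T)
    -- arbitrary decisions
    (x : ℕ → EuclideanSpace ℝ (Fin d))
    (f g : ℕ → (Fin (m + 1) → EuclideanSpace ℝ (Fin d)) → ℝ)
    (G : ℝ) (hG : 0 ≤ G)
    -- 0 ≤ g_t⁺ ≤ G pointwise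
    (hgbd : ∀ t z, max (g t z) 0 ≤ G)
    -- convention: f_t = 0 and g_t = 0 outside {m+1,…,T}
    (hf0 : ∀ t, t ≤ m ∨ T < t → ∀ z, f t z = 0)
    (hg0 : ∀ t, t ≤ m ∨ T < t → ∀ z, g t z = 0)
    -- cumulative violation
    (V : ℕ → ℝ)
    (hV0 : ∀ t ≤ m, V t = 0)
    (hVrec : ∀ t, m + 1 ≤ t → t ≤ T →
      V t = V (t - 1) + max (g t (fun i => x (t - m + (i : ℕ)))) 0)
    -- penalty function: convex, differentiable, Φ′ nonnegative and nondecreasing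
    (Φ Φ' : ℝ → ℝ)
    (hΦconv : ConvexOn ℝ (Set.Ici 0) Φ)
    (hΦderiv : ∀ v ∈ Set.Ici (0:ℝ), HasDerivAt Φ (Φ' v) v)
    (hΦ'nonneg : ∀ v ∈ Set.Ici (0:ℝ), 0 ≤ Φ' v)
    (hΦ'mono : MonotoneOn Φ' (Set.Ici 0))
    (hΦnonneg : ∀ v ∈ Set.Ici (0:ℝ), 0 ≤ Φ v)
    -- memory-based surrogate losses
    (L : ℕ → (Fin (m + 1) → EuclideanSpace ℝ (Fin d)) → ℝ)
    (hL : ∀ t z, L t z = f t z + Φ' (V (t - m - 1)) * max (g t z) 0)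
    -- feasible comparator
    (u : EuclideanSpace ℝ (Fin d))
    (hu : ∀ t ∈ Finset.Icc (m + 1) T, g t (fun _ => u) ≤ 0) :
    Φ (V T) - Φ (V m)
      + ∑ t ∈ Finset.Icc (m + 1) T,
          (f t (fun i => x (t - m + (i : ℕ))) - f t (fun _ => u))
    ≤ ∑ t ∈ Finset.Icc (m + 1) T,
          (L t (fun i => x (t - m + (i : ℕ))) - L t (fun _ => u))
        + G * (m + 1) * Φ' (V T) := by
  set p : ℕ → ℝ := fun t => max (g t (fun i => x (t - m + (i : ℕ)))) 0 with hp
  have hp_nonneg : ∀ t, 0 ≤ p t := fun t => le_max_right _ _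
  have hpG : ∀ t, p t ≤ G := fun t => hgbd t _
  -- monotonicity of V on [0, T]
  have hstep : ∀ t, m + 1 ≤ t → t ≤ T → V (t - 1) ≤ V t := by
    intro t h1 h2
    rw [hVrec t h1 h2]
    exact le_add_of_nonneg_right (hp_nonneg t)
  have hVmono : ∀ s t, s ≤ t → t ≤ T → V s ≤ V t := by
    intro s t hst htT
    induction t with
    | zero =>
      have : s = 0 := by omega
      subst this; exact le_rfl
    | succ n ih =>
      rcases Nat.lt_or_ge s (n + 1) with hs | hs
      · have hsn : s ≤ n := by omega
        have h1 : V s ≤ V n := ih hsn (by omega)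
        have h2 : V n ≤ V (n + 1) := by
          rcases Nat.lt_or_ge n m with hn | hn
          · rw [hV0 n (by omega), hV0 (n + 1) (by omega)]
          · have := hstep (n + 1) (by omega) htT
            simpa using this
        linarith
      · have : s = n + 1 := by omega
        subst this; exact le_rfl
  have hVnonneg : ∀ t, t ≤ T → 0 ≤ V t := by
    intro t ht
    have h0 : V 0 = 0 := hV0 0 (Nat.zero_le m)
    have := hVmono 0 t (Nat.zero_le t) ht
    linarith
  -- rewrite the L-difference
  have hA : ∀ t ∈ Finset.Icc (m + 1) T,
      L t (fun i => x (t - m + (i : ℕ))) - L t (fun _ => u)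
        = (f t (fun i => x (t - m + (i : ℕ))) - f t (fun _ => u))
          + Φ' (V (t - m - 1)) * p t := by
    intro t ht
    rw [hL, hL]
    have hmax : max (g t (fun _ => u)) 0 = 0 := max_eq_right (hu t ht)
    rw [hmax]
    ring
  rw [Finset.sum_congr rfl hA, Finset.sum_add_distrib]
  -- Step B: Φ(V N) - Φ(V m) ≤ Σ Φ'(V t) p t
  have hB : ∀ N, m ≤ N → N ≤ T →
      Φ (V N) - Φ (V m) ≤ ∑ t ∈ Finset.Icc (m + 1) N, Φ' (V t) * p t := by
    intro N hN hNT
    induction N, hN using Nat.le_induction with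
    | base => simp [Finset.Icc_eq_empty_of_lt (by omega : m < m + 1)]
    | succ N hmN ih =>
      have hNT' : N ≤ T := by omega
      have hsum : ∑ t ∈ Finset.Icc (m + 1) (N + 1), Φ' (V t) * p t
          = (∑ t ∈ Finset.Icc (m + 1) N, Φ' (V t) * p t) + Φ' (V (N + 1)) * p (N + 1) := by
        rw [← Finset.sum_Icc_succ_top (by omega : m + 1 ≤ N + 1)]
      have hrec : V (N + 1) = V N + p (N + 1) := by
        have := hVrec (N + 1) (by omega) (by omega)
        simpa using this
      have hmvt : Φ (V (N + 1)) - Φ (V N) ≤ Φ' (V (N + 1)) * p (N + 1) := by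
        have := mvt_aux Φ Φ' hΦderiv hΦ'mono (V N) (V (N + 1))
          (hVnonneg N hNT') (by rw [hrec]; linarith [hp_nonneg (N + 1)])
        rw [hrec] at this ⊢
        simpa using this
      have := ih hNT'
      rw [hsum]
      linarith
  have hBT := hB T (by omega) le_rfl
  -- Step C: sum shift bound
  have hqT : ∀ t, t ≤ T → Φ' (V t) ≤ Φ' (V T) := fun t ht =>
    hΦ'mono (hVnonneg t ht) (hVnonneg T le_rfl) (hVmono t T ht le_rfl)
  have hqnn : ∀ t, t ≤ T → 0 ≤ Φ' (V t) := fun t ht => hΦ'nonneg _ (hVnonneg t ht)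
  have hshift : ∑ t ∈ Finset.Icc (m + 1) T, Φ' (V (t - m - 1))
      = ∑ s ∈ Finset.Icc 0 (T - m - 1), Φ' (V s) := by
    rw [Finset.sum_bij' (fun t _ => t - m - 1) (fun s _ => s + m + 1)]
    · intro t ht; simp only [Finset.mem_Icc] at *; omega
    · intro s hs; simp only [Finset.mem_Icc] at *; omega
    · intro t ht; simp only [Finset.mem_Icc] at ht; omega
    · intro s hs; simp only [Finset.mem_Icc] at hs; omega
    · intro t ht; rfl
  have hD : ∑ t ∈ Finset.Icc (m + 1) T, Φ' (V t)
      ≤ (∑ t ∈ Finset.Icc (m + 1) T, Φ' (V (t - m - 1))) + (m + 1) * Φ' (V T) := by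
    rw [hshift]
    set A := Finset.Icc (m + 1) T
    set B := Finset.Icc 0 (T - m - 1)
    have hsplit : ∑ t ∈ A, Φ' (V t) = (∑ t ∈ A ∩ B, Φ' (V t)) + ∑ t ∈ A \ B, Φ' (V t) :=
      (Finset.sum_inter_add_sum_sdiff A B _).symm
    have h1 : ∑ t ∈ A ∩ B, Φ' (V t) ≤ ∑ t ∈ B, Φ' (V t) := by
      apply Finset.sum_le_sum_of_subset_of_nonneg (Finset.inter_subset_right)
      intro t ht _
      exact hqnn t (by simp only [B, Finset.mem_Icc] at ht; omega)
    have h2 : ∑ t ∈ A \ B, Φ' (V t) ≤ ∑ t ∈ Finset.Icc (T - m) T, Φ' (V t) := by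
      apply Finset.sum_le_sum_of_subset_of_nonneg
      · intro t ht
        simp only [A, B, Finset.mem_sdiff, Finset.mem_Icc] at ht ⊢
        omega
      · intro t ht _
        exact hqnn t (by simp only [Finset.mem_Icc] at ht; omega)
    have h3 : ∑ t ∈ Finset.Icc (T - m) T, Φ' (V t) ≤ (m + 1) * Φ' (V T) := by
      have hcard : (Finset.Icc (T - m) T).card = m + 1 := by
        rw [Nat.card_Icc]; omega
      calc ∑ t ∈ Finset.Icc (T - m) T, Φ' (V t)
          ≤ ∑ t ∈ Finset.Icc (T - m) T, Φ' (V T) :=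
            Finset.sum_le_sum (fun t ht => hqT t (by simp only [Finset.mem_Icc] at ht; omega))
        _ = (m + 1) * Φ' (V T) := by rw [Finset.sum_const, hcard]; push_cast; ring
    linarith
  -- Step C': termwise comparison
  have hC : ∑ t ∈ Finset.Icc (m + 1) T, Φ' (V t) * p t
      ≤ (∑ t ∈ Finset.Icc (m + 1) T, Φ' (V (t - m - 1)) * p t)
        + G * (m + 1) * Φ' (V T) := by
    have hterm : ∀ t ∈ Finset.Icc (m + 1) T,
        Φ' (V t) * p t - Φ' (V (t - m - 1)) * p t
          ≤ G * (Φ' (V t) - Φ' (V (t - m - 1))) := by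
      intro t ht
      simp only [Finset.mem_Icc] at ht
      have hdiff : Φ' (V (t - m - 1)) ≤ Φ' (V t) :=
        hΦ'mono (hVnonneg _ (by omega)) (hVnonneg t ht.2)
          (hVmono (t - m - 1) t (by omega) ht.2)
      have : (Φ' (V t) - Φ' (V (t - m - 1))) * p t
          ≤ (Φ' (V t) - Φ' (V (t - m - 1))) * G :=
        mul_le_mul_of_nonneg_left (hpG t) (by linarith)
      linarith [this]
    have h4 : ∑ t ∈ Finset.Icc (m + 1) T, (Φ' (V t) * p t - Φ' (V (t - m - 1)) * p t)
        ≤ ∑ t ∈ Finset.Icc (m + 1) T, G * (Φ' (V t) - Φ' (V (t - m - 1))) :=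
      Finset.sum_le_sum hterm
    rw [Finset.sum_sub_distrib] at h4
    have h5 : ∑ t ∈ Finset.Icc (m + 1) T, G * (Φ' (V t) - Φ' (V (t - m - 1)))
        = G * ((∑ t ∈ Finset.Icc (m + 1) T, Φ' (V t))
            - ∑ t ∈ Finset.Icc (m + 1) T, Φ' (V (t - m - 1))) := by
      rw [← Finset.mul_sum, Finset.sum_sub_distrib]
    rw [h5] at h4
    have h6 : G * ((∑ t ∈ Finset.Icc (m + 1) T, Φ' (V t))
        - ∑ t ∈ Finset.Icc (m + 1) T, Φ' (V (t - m - 1)))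
        ≤ G * ((m + 1) * Φ' (V T)) :=
      mul_le_mul_of_nonneg_left (by linarith [hD]) hG
    have : G * ((m + 1) * Φ' (V T)) = G * (m + 1) * Φ' (V T) := by ring
    linarith
  linarith [hBT, hC]
end

section
/- (Corollary on ODAFTRL with hints.) Suppose a real number R satisfies R ≤ (ρ/α + 1)·(2·max_{1≤t≤T} Σ_{j=t−m}^{t−1} a_j + √(Σ_{t=1}^{T} (a_t² + 2·α·b_t))). Then R ≤ (ρ/α + 1)·(2·m·D + √(D² + α))·√(Σ_{t=1}^{T} e_t²). -/
/-- `huber(x, y) := (1/2)·x² − (1/2)·(max{|x| − |y|, 0})²`. -/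
noncomputable def huber (x y : ℝ) : ℝ :=
  (1/2) * x ^ 2 - (1/2) * (max (|x| - |y|) 0) ^ 2

/-- Corollary on ODAFTRL with hints: if
`R ≤ (ρ/α + 1)·(2·max_{1≤t≤T} Σ_{j=t−m}^{t−1} a_j + √(Σ_{t=1}^T (a_t² + 2αb_t)))`
then `R ≤ (ρ/α + 1)·(2mD + √(D² + α))·√(Σ_{t=1}^T e_t²)`. -/
theorem odaftrl_hint_corollary
    (d T : ℕ) (m : ℕ) (hd : 0 < d) (hT : 0 < T)
    (D α ρ : ℝ) (hD : 0 ≤ D) (hα : 0 < α) (hρ : 0 ≤ ρ)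
    -- revealed gradients and hints, indexed by ℤ
    (γ h : ℤ → EuclideanSpace ℝ (Fin d))
    (hγ0 : ∀ t : ℤ, t ≤ 0 → γ t = 0)
    (e a b : ℤ → ℝ)
    (he : ∀ t : ℤ, e t = ‖h t - ∑ τ ∈ Finset.Icc (t - (m : ℤ)) t, γ τ‖)
    (ha : ∀ t : ℤ, 1 ≤ t → a t = D * min (e t) ‖γ t‖)
    (ha0 : ∀ t : ℤ, t ≤ 0 → a t = 0)
    (hb : ∀ t : ℤ, b t = huber (e t) ‖γ t‖)
    (hne : (Finset.Icc (1 : ℤ) (T : ℤ)).Nonempty)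
    (R : ℝ)
    (hR : R ≤ (ρ / α + 1) *
        (2 * (Finset.Icc (1 : ℤ) (T : ℤ)).sup' hne
              (fun t => ∑ j ∈ Finset.Icc (t - (m : ℤ)) (t - 1), a j)
          + Real.sqrt (∑ t ∈ Finset.Icc (1 : ℤ) (T : ℤ),
              (a t ^ 2 + 2 * α * b t)))) :
    R ≤ (ρ / α + 1) * (2 * m * D + Real.sqrt (D ^ 2 + α))
          * Real.sqrt (∑ t ∈ Finset.Icc (1 : ℤ) (T : ℤ), e t ^ 2) := by
  set S := Real.sqrt (∑ t ∈ Finset.Icc (1 : ℤ) (T : ℤ), e t ^ 2) with hS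
  have hSnn : 0 ≤ S := Real.sqrt_nonneg _
  have hsumnn : 0 ≤ ∑ t ∈ Finset.Icc (1 : ℤ) (T : ℤ), e t ^ 2 :=
    Finset.sum_nonneg fun t _ => sq_nonneg _
  have hen : ∀ t : ℤ, 0 ≤ e t := fun t => by rw [he t]; exact norm_nonneg _
  have hcoef : 0 ≤ ρ / α + 1 := by positivity
  -- each a j ≤ D * S for j ≤ T
  have haDS : ∀ j : ℤ, j ≤ (T : ℤ) → a j ≤ D * S := by
    intro j hj
    rcases le_or_gt j 0 with hj0 | hj0
    · rw [ha0 j hj0]; positivity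
    · have hj1 : (1 : ℤ) ≤ j := hj0
      have hmem : j ∈ Finset.Icc (1 : ℤ) (T : ℤ) := Finset.mem_Icc.mpr ⟨hj1, hj⟩
      have h1 : e j ≤ S := by
        have : e j ^ 2 ≤ ∑ t ∈ Finset.Icc (1 : ℤ) (T : ℤ), e t ^ 2 :=
          Finset.single_le_sum (fun t _ => sq_nonneg (e t)) hmem
        calc e j = Real.sqrt (e j ^ 2) := (Real.sqrt_sq (hen j)).symm
          _ ≤ S := Real.sqrt_le_sqrt this
      rw [ha j hj1]
      exact mul_le_mul_of_nonneg_left (le_trans (min_le_left _ _) h1) hD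
  -- the sup' term
  have hsup : (Finset.Icc (1 : ℤ) (T : ℤ)).sup'
      hne (fun t => ∑ j ∈ Finset.Icc (t - (m : ℤ)) (t - 1), a j) ≤ m * D * S := by
    apply Finset.sup'_le
    intro t ht
    obtain ⟨ht1, htT⟩ := Finset.mem_Icc.mp ht
    have hcard : (Finset.Icc (t - (m : ℤ)) (t - 1)).card = m := by
      rw [Int.card_Icc]
      omega
    calc ∑ j ∈ Finset.Icc (t - (m : ℤ)) (t - 1), a j
        ≤ ∑ j ∈ Finset.Icc (t - (m : ℤ)) (t - 1), D * S := by
          apply Finset.sum_le_sum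
          intro j hj
          obtain ⟨_, hj2⟩ := Finset.mem_Icc.mp hj
          exact haDS j (by omega)
      _ = m * (D * S) := by rw [Finset.sum_const, hcard, nsmul_eq_mul]
      _ = m * D * S := by ring
  -- the sqrt term
  have hsq : Real.sqrt (∑ t ∈ Finset.Icc (1 : ℤ) (T : ℤ), (a t ^ 2 + 2 * α * b t))
      ≤ Real.sqrt (D ^ 2 + α) * S := by
    have hterm : ∀ t ∈ Finset.Icc (1 : ℤ) (T : ℤ),
        a t ^ 2 + 2 * α * b t ≤ (D ^ 2 + α) * e t ^ 2 := by
      intro t ht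
      obtain ⟨ht1, _⟩ := Finset.mem_Icc.mp ht
      have ha2 : a t ^ 2 ≤ D ^ 2 * e t ^ 2 := by
        rw [ha t ht1]
        have h1 : 0 ≤ min (e t) ‖γ t‖ := le_min (hen t) (norm_nonneg _)
        have h2 : min (e t) ‖γ t‖ ≤ e t := min_le_left _ _
        calc (D * min (e t) ‖γ t‖) ^ 2 = D ^ 2 * (min (e t) ‖γ t‖) ^ 2 := by ring
          _ ≤ D ^ 2 * e t ^ 2 := by
              apply mul_le_mul_of_nonneg_left _ (sq_nonneg D)
              exact pow_le_pow_left₀ h1 h2 2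
      have hb2 : b t ≤ (1/2) * e t ^ 2 := by
        rw [hb t]
        unfold huber
        have : 0 ≤ (1/2 : ℝ) * (max (|e t| - |‖γ t‖|) 0) ^ 2 := by positivity
        linarith
      nlinarith [hα.le]
    calc Real.sqrt (∑ t ∈ Finset.Icc (1 : ℤ) (T : ℤ), (a t ^ 2 + 2 * α * b t))
        ≤ Real.sqrt (∑ t ∈ Finset.Icc (1 : ℤ) (T : ℤ), (D ^ 2 + α) * e t ^ 2) :=
          Real.sqrt_le_sqrt (Finset.sum_le_sum hterm)
      _ = Real.sqrt (D ^ 2 + α) * S := by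
          rw [← Finset.mul_sum, Real.sqrt_mul (by positivity)]
  calc R ≤ (ρ / α + 1) *
        (2 * (Finset.Icc (1 : ℤ) (T : ℤ)).sup' hne
              (fun t => ∑ j ∈ Finset.Icc (t - (m : ℤ)) (t - 1), a j)
          + Real.sqrt (∑ t ∈ Finset.Icc (1 : ℤ) (T : ℤ),
              (a t ^ 2 + 2 * α * b t))) := hR
    _ ≤ (ρ / α + 1) * (2 * (m * D * S) + Real.sqrt (D ^ 2 + α) * S) := by
        apply mul_le_mul_of_nonneg_left _ hcoef
        have := mul_le_mul_of_nonneg_left hsup (by norm_num : (0:ℝ) ≤ 2)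
        linarith
    _ = (ρ / α + 1) * (2 * m * D + Real.sqrt (D ^ 2 + α)) * S := by ring
end

section
/- (Quantitative core of the optimistic analysis.) Let F, T, C, E_f, E_g, G be nonnegative reals, let m be a nonnegative integer, suppose a := C·√E_g + G·(m+1) > 0, and set λ := 1/(2a) and Φ(v) := exp(λv) − 1 (so Φ′(v) = λ·exp(λv)). If real numbers R and V satisfy V ≥ 0, R ≥ −2·F·T, and Φ(V) + R ≤ C·√E_f + Φ′(V)·a, then R ≤ 1 + C·√E_f and V ≤ 2a·log(2·(1 + 2·F·T + C·√E_f)). -/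
/-- Quantitative core of the optimistic analysis: with
`a = C·√E_g + G·(m+1) > 0`, `λ = 1/(2a)`, `Φ(v) = exp(λv) − 1`,
`Φ′(v) = λ·exp(λv)`, if `V ≥ 0`, `R ≥ −2FT` and
`Φ(V) + R ≤ C·√E_f + Φ′(V)·a`, then `R ≤ 1 + C·√E_f` and
`V ≤ 2a·log(2·(1 + 2FT + C·√E_f))`. -/
theorem optimistic_core_inequality
    (F T C Ef Eg G : ℝ) (m : ℕ)
    (hF : 0 ≤ F) (hT : 0 ≤ T) (hC : 0 ≤ C) (hEf : 0 ≤ Ef) (hEg : 0 ≤ Eg)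
    (hG : 0 ≤ G)
    (a : ℝ) (ha : a = C * Real.sqrt Eg + G * ((m : ℝ) + 1)) (hapos : 0 < a)
    (lam : ℝ) (hlam : lam = 1 / (2 * a))
    (R V : ℝ) (hV : 0 ≤ V) (hR : R ≥ -(2 * F * T))
    (hmain : (Real.exp (lam * V) - 1) + R
        ≤ C * Real.sqrt Ef + (lam * Real.exp (lam * V)) * a) :
    R ≤ 1 + C * Real.sqrt Ef ∧
    V ≤ 2 * a * Real.log (2 * (1 + 2 * F * T + C * Real.sqrt Ef)) := by
  have hane : a ≠ 0 := ne_of_gt hapos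
  have hla : lam * a = 1 / 2 := by rw [hlam]; field_simp
  have hmain2 : Real.exp (lam * V) / 2 ≤ 1 + C * Real.sqrt Ef - R := by
    have h : lam * Real.exp (lam * V) * a = Real.exp (lam * V) / 2 := by
      rw [mul_comm lam, mul_assoc, hla]; ring
    rw [h] at hmain; linarith
  have hexp1 : (1 : ℝ) ≤ Real.exp (lam * V) := by
    have hl : 0 ≤ lam := by rw [hlam]; positivity
    have h := mul_nonneg hl hV
    calc (1 : ℝ) = Real.exp 0 := Real.exp_zero.symm
      _ ≤ Real.exp (lam * V) := Real.exp_le_exp.mpr h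
  constructor
  · linarith
  · have h2 : Real.exp (lam * V) ≤ 2 * (1 + 2 * F * T + C * Real.sqrt Ef) := by
      linarith
    have hCE : 0 ≤ C * Real.sqrt Ef := mul_nonneg hC (Real.sqrt_nonneg Ef)
    have hpos : 0 < 2 * (1 + 2 * F * T + C * Real.sqrt Ef) := by nlinarith
    have hlog : lam * V ≤ Real.log (2 * (1 + 2 * F * T + C * Real.sqrt Ef)) :=
      (Real.le_log_iff_exp_le hpos).mpr h2
    have heq : lam * V = V / (2 * a) := by rw [hlam]; ring
    rw [heq, div_le_iff₀ (by positivity)] at hlog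
    linarith [hlog]
end

section
/- (Optimistic COCO with memory, conditional on the forward regret guarantee.) Let u ∈ ℝ^d satisfy g_t^i(u) ≤ 0 for all t ∈ {m+1,…,T} and i ∈ {0,…,m}, let C, E_f, E_g ≥ 0 with a := C·√E_g + G·(m+1) > 0, and set λ := 1/(2a), so that the penalty is Φ(v) := exp(λv) − 1. If the forward regret satisfies Σ_{t=m+1}^{T} [Z_t(x_t) − Z_t(u)] ≤ C·(√E_f + Φ′(V_T)·√E_g), then Σ_{t=m+1}^{T} [f_t(x_{t−m},…,x_t) − f_t(u,…,u)] ≤ 1 + C·√E_f and V_T ≤ 2·(C·√E_g + G·(m+1))·log(2·(1 + 2·F·T + C·√E_f)). -/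
private lemma exp_sub_exp_le' (x y : ℝ) : Real.exp x - Real.exp y ≤ Real.exp x * (x - y) := by
  have h := Real.add_one_le_exp (y - x)
  have hx := (Real.exp_pos x).le
  have h2 : Real.exp x * ((y - x) + 1) ≤ Real.exp x * Real.exp (y - x) := by
    apply mul_le_mul_of_nonneg_left (by linarith) hx
  rw [← Real.exp_add] at h2
  have hxy : x + (y - x) = y := by ring
  rw [hxy] at h2
  nlinarith

private lemma telescope' (φ : ℕ → ℝ) (m N : ℕ) (h : m ≤ N) :
    ∑ s ∈ Finset.Icc (m+1) N, (φ s - φ (s-1)) = φ N - φ m := by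
  induction N, h using Nat.le_induction with
  | base => rw [Finset.Icc_eq_empty (by omega)]; simp
  | succ N hN ih =>
      rw [Finset.sum_Icc_succ_top (by omega), ih]
      simp

private lemma reindex' (m T : ℕ) (W : ℕ → ℕ → ℝ)
    (hW : ∀ s i, i ≤ m → T < s ∨ s ≤ m + i → W s i = 0) :
    ∑ t ∈ Finset.Icc (m+1) T, ∑ i ∈ Finset.range (m+1), W (t+i) i
      = ∑ s ∈ Finset.Icc (m+1) T, ∑ i ∈ Finset.range (m+1), W s i := by
  rw [Finset.sum_comm, Finset.sum_comm (s := Finset.Icc (m+1) T)]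
  apply Finset.sum_congr rfl
  intro i hi
  have him : i ≤ m := by simpa [Nat.lt_succ_iff] using hi
  have h1 : ∑ t ∈ Finset.Icc (m+1) T, W (t+i) i
      = ∑ s ∈ Finset.Icc (m+1+i) (T+i), W s i := by
    rw [← Finset.image_add_right_Icc]
    rw [Finset.sum_image (by intro a _ b _ h; exact Nat.add_right_cancel h)]
  rw [h1]
  have h2 : ∑ s ∈ Finset.Icc (m+1+i) (T+i), W s i = ∑ s ∈ Finset.Icc (m+1) (T+i), W s i := by
    apply Finset.sum_subset (Finset.Icc_subset_Icc_left (by omega))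
    intro s hs hns
    simp only [Finset.mem_Icc] at hs hns
    exact hW s i him (Or.inr (by omega))
  have h3 : ∑ s ∈ Finset.Icc (m+1) T, W s i = ∑ s ∈ Finset.Icc (m+1) (T+i), W s i := by
    apply Finset.sum_subset (Finset.Icc_subset_Icc_right (by omega))
    intro s hs hns
    simp only [Finset.mem_Icc] at hs hns
    exact hW s i him (Or.inl (by omega))
  rw [h2, h3]

set_option maxHeartbeats 1000000 in
/-- Optimistic COCO with memory, conditional on the forward
regret guarantee: with penalty `Φ(v) = exp(λv) − 1`, `λ = 1/(2a)`,
`a = C·√E_g + G·(m+1) > 0`, if the forward regret satisfies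
`Σ [Z_t(x_t) − Z_t(u)] ≤ C·(√E_f + Φ′(V_T)·√E_g)` for a comparator `u` feasible
for all constraint components, then the regret is at most `1 + C·√E_f` and
`V_T ≤ 2·(C·√E_g + G·(m+1))·log(2·(1 + 2·F·T + C·√E_f))`. -/
theorem optimistic_coco_memory
    (d m T : ℕ) (hd : 0 < d) (hm : 0 < m) (hT : m + 1 ≤ T)
    -- arbitrary decisions
    (x : ℕ → EuclideanSpace ℝ (Fin d))
    (f g : ℕ → (Fin (m + 1) → EuclideanSpace ℝ (Fin d)) → ℝ)
    (F G : ℝ) (hF : 0 ≤ F) (hG : 0 ≤ G)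
    -- |f_t| ≤ F and 0 ≤ g_t⁺ ≤ G pointwise
    (hfbd : ∀ t z, |f t z| ≤ F)
    (hgbd : ∀ t z, max (g t z) 0 ≤ G)
    -- convention: f_t = 0 and g_t = 0 outside {m+1,…,T}
    (hf0 : ∀ t, t ≤ m ∨ T < t → ∀ z, f t z = 0)
    (hg0 : ∀ t, t ≤ m ∨ T < t → ∀ z, g t z = 0)
    -- cumulative violation
    (V : ℕ → ℝ)
    (hV0 : ∀ t ≤ m, V t = 0)
    (hVrec : ∀ t, m + 1 ≤ t → t ≤ T →
      V t = V (t - 1) + max (g t (fun i => x (t - m + (i : ℕ)))) 0)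
    -- separable components: the i-th component acts on the decision made
    -- i rounds before t (coordinate m−i of the tuple)
    (fi gi : ℕ → ℕ → EuclideanSpace ℝ (Fin d) → ℝ)
    (hsepf : ∀ t, ∀ z : Fin (m + 1) → EuclideanSpace ℝ (Fin d),
      f t z = ∑ i ∈ Finset.range (m + 1),
        fi t i (z ⟨m - i, Nat.lt_succ_of_le (Nat.sub_le m i)⟩))
    (hsepg : ∀ t, ∀ z : Fin (m + 1) → EuclideanSpace ℝ (Fin d),
      g t z = ∑ i ∈ Finset.range (m + 1),
        gi t i (z ⟨m - i, Nat.lt_succ_of_le (Nat.sub_le m i)⟩))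
    -- convention: components vanish when t ≤ m, t > T, or t − i ≤ m
    (hfi0 : ∀ t i, t ≤ m ∨ T < t ∨ t - i ≤ m → ∀ y, fi t i y = 0)
    (hgi0 : ∀ t i, t ≤ m ∨ T < t ∨ t - i ≤ m → ∀ y, gi t i y = 0)
    -- prediction-error quantities and the penalty parameter
    (C Ef Eg : ℝ) (hC : 0 ≤ C) (hEf : 0 ≤ Ef) (hEg : 0 ≤ Eg)
    (a : ℝ) (ha : a = C * Real.sqrt Eg + G * ((m : ℝ) + 1)) (hapos : 0 < a)
    (lam : ℝ) (hlam : lam = 1 / (2 * a))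
    -- forward losses with penalty Φ(v) = exp(λv) − 1, Φ′(v) = λ·exp(λv)
    (Z : ℕ → EuclideanSpace ℝ (Fin d) → ℝ)
    (hZ : ∀ t y, Z t y = ∑ i ∈ Finset.range (m + 1),
      (fi (t + i) i y
        + (lam * Real.exp (lam * V (t - m - 1 + i))) * max (gi (t + i) i y) 0))
    -- feasible comparator
    (u : EuclideanSpace ℝ (Fin d))
    (hu : ∀ t ∈ Finset.Icc (m + 1) T, ∀ i ∈ Finset.range (m + 1), gi t i u ≤ 0)
    -- forward regret guarantee
    (hforward : ∑ t ∈ Finset.Icc (m + 1) T, (Z t (x t) - Z t u)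
      ≤ C * (Real.sqrt Ef
          + (lam * Real.exp (lam * V T)) * Real.sqrt Eg)) :
    (∑ t ∈ Finset.Icc (m + 1) T,
        (f t (fun i => x (t - m + (i : ℕ))) - f t (fun _ => u))
      ≤ 1 + C * Real.sqrt Ef) ∧
    V T ≤ 2 * (C * Real.sqrt Eg + G * ((m : ℝ) + 1))
        * Real.log (2 * (1 + 2 * F * T + C * Real.sqrt Ef)) := by
  classical
  have hlampos : 0 < lam := by rw [hlam]; positivity
  -- basic facts about V
  have hVnonneg : ∀ s, s ≤ T → 0 ≤ V s := by
    intro s hs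
    induction s with
    | zero => rw [hV0 0 (Nat.zero_le m)]
    | succ n ih =>
      by_cases h : n + 1 ≤ m
      · rw [hV0 _ h]
      · have h1 : m + 1 ≤ n + 1 := by omega
        rw [hVrec _ h1 hs]
        have h2 := ih (by omega)
        have h3 := le_max_right (g (n+1) (fun i => x (n+1 - m + (i:ℕ)))) (0:ℝ)
        simpa using add_nonneg h2 h3
  have hstep : ∀ s, s ≤ T → V s ≤ V (s-1) + G := by
    intro s hs
    by_cases h : s ≤ m
    · rw [hV0 s h, hV0 (s-1) (by omega)]; linarith
    · rw [hVrec s (by omega) hs]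
      have := hgbd s (fun i => x (s - m + (i:ℕ)))
      linarith
  have hlip : ∀ j s, s ≤ T → V s ≤ V (s - j) + j * G := by
    intro j
    induction j with
    | zero => intro s _; simp
    | succ j ih =>
      intro s hs
      have h1 := ih s hs
      have h2 := hstep (s - j) (by omega)
      have h3 : s - j - 1 = s - (j+1) := by omega
      rw [h3] at h2
      push_cast
      nlinarith [h1, h2]
  -- the increment of V
  have hdelta : ∀ s ∈ Finset.Icc (m+1) T,
      V s - V (s-1) = max (g s (fun i => x (s - m + (i:ℕ)))) 0 := by
    intro s hs
    simp only [Finset.mem_Icc] at hs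
    rw [hVrec s hs.1 hs.2]; ring
  have hdelta_nonneg : ∀ s ∈ Finset.Icc (m+1) T, 0 ≤ V s - V (s-1) := by
    intro s hs; rw [hdelta s hs]; exact le_max_right _ _
  -- notation
  set k := C * Real.sqrt Eg with hk
  have hknn : 0 ≤ k := by positivity
  set P : ℕ → ℝ := fun s => lam * Real.exp (lam * V (s - (m+1))) with hP
  have hPnn : ∀ s, 0 ≤ P s := by intro s; positivity
  set M : ℕ → ℝ := fun s => ∑ i ∈ Finset.range (m+1), max (gi s i (x (s - i))) 0 with hM
  -- Step 1: sum of Z at x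
  have hsum_x : ∑ t ∈ Finset.Icc (m+1) T, Z t (x t)
      = ∑ s ∈ Finset.Icc (m+1) T, (f s (fun i => x (s - m + (i:ℕ))) + P s * M s) := by
    have e1 : ∑ t ∈ Finset.Icc (m+1) T, Z t (x t)
        = ∑ t ∈ Finset.Icc (m+1) T, ∑ i ∈ Finset.range (m+1),
            (fun s i => fi s i (x (s - i)) + P s * max (gi s i (x (s - i))) 0) (t+i) i := by
      apply Finset.sum_congr rfl
      intro t ht
      simp only [Finset.mem_Icc] at ht
      rw [hZ]
      apply Finset.sum_congr rfl
      intro i hi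
      have him : i ≤ m := by simpa [Nat.lt_succ_iff] using hi
      have h1 : t + i - i = t := by omega
      have h2 : t - m - 1 + i = t + i - (m+1) := by omega
      simp only [hP, h1, h2]
    rw [e1, reindex' m T (fun s i => fi s i (x (s - i)) + P s * max (gi s i (x (s - i))) 0) (by
      intro s i him h
      have hfz : fi s i (x (s - i)) = 0 := by
        apply hfi0 s i
        rcases h with h | h
        · exact Or.inr (Or.inl h)
        · exact Or.inr (Or.inr (by omega))
      have hgz : gi s i (x (s - i)) = 0 := by
        apply hgi0 s i
        rcases h with h | h
        · exact Or.inr (Or.inl h)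
        · exact Or.inr (Or.inr (by omega))
      simp [hfz, hgz])]
    apply Finset.sum_congr rfl
    intro s hs
    simp only [Finset.mem_Icc] at hs
    rw [Finset.sum_add_distrib, ← Finset.mul_sum]
    congr 1
    rw [hsepf]
    apply Finset.sum_congr rfl
    intro i hi
    have him : i ≤ m := by simpa [Nat.lt_succ_iff] using hi
    have : s - m + (m - i) = s - i := by omega
    simp [this]
  -- Step 2: sum of Z at u
  have hsum_u : ∑ t ∈ Finset.Icc (m+1) T, Z t u
      = ∑ s ∈ Finset.Icc (m+1) T, f s (fun _ => u) := by
    have e1 : ∑ t ∈ Finset.Icc (m+1) T, Z t u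
        = ∑ t ∈ Finset.Icc (m+1) T, ∑ i ∈ Finset.range (m+1),
            (fun s i => fi s i u) (t+i) i := by
      apply Finset.sum_congr rfl
      intro t ht
      simp only [Finset.mem_Icc] at ht
      rw [hZ]
      apply Finset.sum_congr rfl
      intro i hi
      have him : i ≤ m := by simpa [Nat.lt_succ_iff] using hi
      have hgle : gi (t+i) i u ≤ 0 := by
        by_cases hle : t + i ≤ T
        · exact hu (t+i) (Finset.mem_Icc.mpr ⟨by omega, hle⟩) i hi
        · rw [hgi0 (t+i) i (Or.inr (Or.inl (by omega))) u]
      rw [max_eq_right hgle]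
      simp
    rw [e1, reindex' m T (fun s i => fi s i u) (by
      intro s i him h
      apply hfi0 s i
      rcases h with h | h
      · exact Or.inr (Or.inl h)
      · exact Or.inr (Or.inr (by omega)))]
    apply Finset.sum_congr rfl
    intro s hs
    rw [hsepf]
  -- Step 3: M s dominates the increment of V
  have hMge : ∀ s ∈ Finset.Icc (m+1) T, V s - V (s-1) ≤ M s := by
    intro s hs
    rw [hdelta s hs]
    have h1 : g s (fun i => x (s - m + (i:ℕ))) ≤ M s := by
      rw [hsepg, hM]
      apply Finset.sum_le_sum
      intro i hi
      simp only [Finset.mem_Icc] at hs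
      have him : i ≤ m := by simpa [Nat.lt_succ_iff] using hi
      have heq : s - m + (m - i) = s - i := by omega
      simp only [heq]
      exact le_max_left _ _
    have h2 : (0:ℝ) ≤ M s := Finset.sum_nonneg fun i _ => le_max_right _ _
    exact max_le h1 h2
  -- Step 4: telescoping lower bound
  set c := lam * (((m:ℝ)+1) * G) with hc
  have hcnn : 0 ≤ c := by positivity
  have hEc : ∀ s ∈ Finset.Icc (m+1) T,
      Real.exp (lam * V s) - Real.exp (lam * V (s-1))
        ≤ Real.exp c * (P s * (V s - V (s-1))) := by
    intro s hs
    have hsmem := hs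
    simp only [Finset.mem_Icc] at hs
    have hd0 := hdelta_nonneg s hsmem
    have h1 := exp_sub_exp_le' (lam * V s) (lam * V (s-1))
    have h2 : V s ≤ V (s - (m+1)) + ((m:ℝ)+1) * G := by
      have := hlip (m+1) s hs.2
      push_cast at this ⊢
      linarith
    have h3 : Real.exp (lam * V s) ≤ Real.exp (lam * V (s - (m+1))) * Real.exp c := by
      rw [← Real.exp_add]
      apply Real.exp_le_exp.mpr
      rw [hc]
      nlinarith
    have h4 : lam * V s - lam * V (s-1) = lam * (V s - V (s-1)) := by ring
    rw [h4] at h1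
    have h5 : Real.exp (lam * V s) * (lam * (V s - V (s-1)))
        ≤ (Real.exp (lam * V (s - (m+1))) * Real.exp c) * (lam * (V s - V (s-1))) := by
      apply mul_le_mul_of_nonneg_right h3 (by positivity)
    calc Real.exp (lam * V s) - Real.exp (lam * V (s-1))
        ≤ Real.exp (lam * V s) * (lam * (V s - V (s-1))) := h1
      _ ≤ (Real.exp (lam * V (s - (m+1))) * Real.exp c) * (lam * (V s - V (s-1))) := h5
      _ = Real.exp c * (P s * (V s - V (s-1))) := by simp only [hP]; ring
  have htel : Real.exp (lam * V T) - 1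
      ≤ Real.exp c * ∑ s ∈ Finset.Icc (m+1) T, (P s * (V s - V (s-1))) := by
    have h1 : ∑ s ∈ Finset.Icc (m+1) T,
        (Real.exp (lam * V s) - Real.exp (lam * V (s-1)))
        = Real.exp (lam * V T) - 1 := by
      rw [telescope' (fun s => Real.exp (lam * V s)) m T (by omega)]
      rw [hV0 m le_rfl]
      simp
    rw [← h1, Finset.mul_sum]
    exact Finset.sum_le_sum hEc
  have hPM : ∑ s ∈ Finset.Icc (m+1) T, (P s * (V s - V (s-1)))
      ≤ ∑ s ∈ Finset.Icc (m+1) T, P s * M s := by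
    apply Finset.sum_le_sum
    intro s hs
    exact mul_le_mul_of_nonneg_left (hMge s hs) (hPnn s)
  -- Step 5: combine with the forward regret guarantee
  set R := ∑ t ∈ Finset.Icc (m+1) T,
      (f t (fun i => x (t - m + (i:ℕ))) - f t (fun _ => u)) with hR
  have hcomb : R + ∑ s ∈ Finset.Icc (m+1) T, P s * M s
      ≤ C * Real.sqrt Ef + lam * Real.exp (lam * V T) * k := by
    have h1 : ∑ t ∈ Finset.Icc (m+1) T, (Z t (x t) - Z t u)
        = R + ∑ s ∈ Finset.Icc (m+1) T, P s * M s := by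
      rw [Finset.sum_sub_distrib, hsum_x, hsum_u, hR, Finset.sum_sub_distrib,
        Finset.sum_add_distrib]
      ring
    rw [h1] at hforward
    calc R + ∑ s ∈ Finset.Icc (m+1) T, P s * M s
        ≤ C * (Real.sqrt Ef + (lam * Real.exp (lam * V T)) * Real.sqrt Eg) := hforward
      _ = C * Real.sqrt Ef + lam * Real.exp (lam * V T) * k := by rw [hk]; ring
  -- the scalar inequality
  set φT := Real.exp (lam * V T) with hφT
  have hφT1 : 1 ≤ φT := by
    rw [hφT]
    have := hVnonneg T le_rfl
    calc (1:ℝ) = Real.exp 0 := by simp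
      _ ≤ Real.exp (lam * V T) := Real.exp_le_exp.mpr (by positivity)
  have hsum1 : Real.exp (-c) * (φT - 1) ≤ ∑ s ∈ Finset.Icc (m+1) T, P s * M s := by
    have hEcpos := Real.exp_pos c
    have h1 : φT - 1 ≤ Real.exp c * ∑ s ∈ Finset.Icc (m+1) T, P s * M s := by
      calc φT - 1 ≤ Real.exp c * ∑ s ∈ Finset.Icc (m+1) T, (P s * (V s - V (s-1))) := htel
        _ ≤ Real.exp c * ∑ s ∈ Finset.Icc (m+1) T, P s * M s :=
            mul_le_mul_of_nonneg_left hPM hEcpos.le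
    have h2 : Real.exp (-c) * Real.exp c = 1 := by
      rw [← Real.exp_add]; simp
    nlinarith [Real.exp_pos (-c)]
  -- key numeric facts
  have hca : c + lam * k = 1/2 := by
    rw [hc, hlam, hk]
    rw [ha] at hapos ⊢
    field_simp
    ring
  have hexpc : 1 - c ≤ Real.exp (-c) := by
    have := Real.add_one_le_exp (-c)
    linarith
  have hexpc1 : Real.exp (-c) ≤ 1 := by
    rw [← Real.exp_zero]
    exact Real.exp_le_exp.mpr (by linarith)
  -- master inequality: R + (1/2)*φT - 1 ≤ C*√Ef
  have hmaster : R + (1/2) * φT - 1 ≤ C * Real.sqrt Ef := by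
    have h1 : R + Real.exp (-c) * (φT - 1) ≤ C * Real.sqrt Ef + lam * φT * k := by
      calc R + Real.exp (-c) * (φT - 1)
          ≤ R + ∑ s ∈ Finset.Icc (m+1) T, P s * M s := by linarith [hsum1]
        _ ≤ C * Real.sqrt Ef + lam * φT * k := hcomb
    have h2 : (Real.exp (-c) - lam * k) * φT ≥ (1/2) * φT := by
      apply mul_le_mul_of_nonneg_right _ (by linarith)
      linarith
    linarith [h1, h2, hexpc1]
  -- lower bound on R
  have hRlb : -(2 * F * T) ≤ R := by
    have h1 : ∀ t ∈ Finset.Icc (m+1) T,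
        -(2*F) ≤ f t (fun i => x (t - m + (i:ℕ))) - f t (fun _ => u) := by
      intro t _
      have ha1 := abs_le.mp (hfbd t (fun i => x (t - m + (i:ℕ))))
      have ha2 := abs_le.mp (hfbd t (fun _ => u))
      linarith [ha1.1, ha2.2]
    have h2 := Finset.card_nsmul_le_sum (Finset.Icc (m+1) T) _ _ h1
    rw [Nat.card_Icc] at h2
    have h3 : ((T + 1 - (m+1) : ℕ) : ℝ) ≤ (T : ℝ) := by
      have : (T + 1 - (m+1) : ℕ) ≤ T := by omega
      exact_mod_cast this
    have h4 : ((T + 1 - (m+1) : ℕ)) • (-(2*F)) = ((T + 1 - (m+1) : ℕ) : ℝ) * (-(2*F)) := by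
      simp [nsmul_eq_mul]
    rw [h4, ← hR] at h2
    nlinarith [h3, h2, hF]
  constructor
  · -- regret bound
    have : (0:ℝ) ≤ (1/2) * φT := by linarith
    linarith
  · -- violation bound
    set B := 1 + 2 * F * (T:ℝ) + C * Real.sqrt Ef with hB
    have hB1 : 1 ≤ B := by
      rw [hB]
      have : (0:ℝ) ≤ 2 * F * T := by positivity
      have : (0:ℝ) ≤ C * Real.sqrt Ef := by positivity
      linarith
    have hφTB : φT ≤ 2 * B := by
      rw [hB]; nlinarith
    have hlog : lam * V T ≤ Real.log (2 * B) := by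
      rw [Real.le_log_iff_exp_le (by linarith)]
      exact hφTB
    have hVT : V T ≤ (2 * a) * Real.log (2 * B) := by
      have h2a : lam * (2 * a) = 1 := by
        rw [hlam]; field_simp
      have h3 := mul_le_mul_of_nonneg_left hlog (by positivity : (0:ℝ) ≤ 2*a)
      have h4 : (2*a) * (lam * V T) = V T := by
        rw [show (2*a)*(lam * V T) = (lam*(2*a))*V T by ring, h2a]; ring
      linarith [h3, h4]
    rw [ha] at hVT
    exact hVT
end

section
/- Regret decomposition for memory-dependent losses with memoryless constraints: for every u ∈ ℝ^d with g_t(u) ≤ 0 for all t ∈ {m+1,…,T}, one has Φ(V_T) − Φ(V_m) + Σ_{t=m+1}^{T} [f_t(x_{t−m},…,x_t) − f_t(u,…,u)] ≤ Σ_{t=m+1}^{T} [ℒ_t − ℒ_t(u)] + G·Φ′(V_T), where ℒ_t := f_t(x_{t−m},…,x_t) + Φ′(V_{t−1})·g_t⁺(x_t) and ℒ_t(u) := f_t(u,…,u) + Φ′(V_{t−1})·g_t⁺(u). -/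
private lemma key_step (Φ Φ' : ℝ → ℝ)
    (hΦderiv : ∀ v ∈ Set.Ici (0:ℝ), HasDerivAt Φ (Φ' v) v)
    (hΦ'mono : MonotoneOn Φ' (Set.Ici 0))
    (G a b : ℝ) (ha : 0 ≤ a) (hab : a ≤ b) (hbaG : b - a ≤ G) :
    Φ b - Φ a ≤ Φ' a * (b - a) + G * (Φ' b - Φ' a) := by
  rcases eq_or_lt_of_le hab with rfl | h
  · simp
  · have hb : 0 ≤ b := ha.trans hab
    have hcont : ContinuousOn Φ (Set.Icc a b) := fun z hz =>
      ((hΦderiv z (le_trans ha hz.1)).continuousAt).continuousWithinAt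
    obtain ⟨c, hc, hc'⟩ := exists_hasDerivAt_eq_slope Φ Φ' h hcont
      (fun z hz => hΦderiv z (le_trans ha hz.1.le))
    have hc0 : (0:ℝ) ≤ c := le_trans ha hc.1.le
    have hcb : Φ' c ≤ Φ' b := hΦ'mono hc0 hb hc.2.le
    have hac : Φ' a ≤ Φ' c := hΦ'mono ha hc0 hc.1.le
    have heq : Φ b - Φ a = Φ' c * (b - a) := by
      rw [hc', div_mul_cancel₀ _ (by linarith : b - a ≠ 0)]
    nlinarith [mul_nonneg (sub_nonneg.2 hcb) (sub_nonneg.2 hab),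
      mul_nonneg (sub_nonneg.2 (hac.trans hcb)) (sub_nonneg.2 hbaG)]

/-- Regret decomposition for memory-dependent losses with
memoryless constraints: for every comparator `u` with `g_t(u) ≤ 0` for all
`t ∈ {m+1,…,T}`,
`Φ(V_T) − Φ(V_m) + Σ_{t=m+1}^T [f_t(x_{t−m},…,x_t) − f_t(u,…,u)]
  ≤ Σ_{t=m+1}^T [ℒ_t − ℒ_t(u)] + G·Φ′(V_T)`, where
`ℒ_t = f_t(x_{t−m},…,x_t) + Φ′(V_{t−1})·g_t⁺(x_t)` and
`ℒ_t(u) = f_t(u,…,u) + Φ′(V_{t−1})·g_t⁺(u)`. -/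
theorem regret_decomposition_memoryless_constraints
    (d m T : ℕ) (hd : 0 < d) (hm : 0 < m) (hT : m + 1 ≤ T)
    -- arbitrary decisions
    (x : ℕ → EuclideanSpace ℝ (Fin d))
    (f : ℕ → (Fin (m + 1) → EuclideanSpace ℝ (Fin d)) → ℝ)
    (g : ℕ → EuclideanSpace ℝ (Fin d) → ℝ)
    (G : ℝ) (hG : 0 ≤ G)
    -- 0 ≤ g_t⁺ ≤ G pointwise
    (hgbd : ∀ t ∈ Finset.Icc (m + 1) T, ∀ y, max (g t y) 0 ≤ G)
    -- cumulative violation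
    (V : ℕ → ℝ)
    (hVm : V m = 0)
    (hVrec : ∀ t, m + 1 ≤ t → t ≤ T → V t = V (t - 1) + max (g t (x t)) 0)
    -- penalty function: convex, differentiable, Φ′ nonnegative and nondecreasing
    (Φ Φ' : ℝ → ℝ)
    (hΦconv : ConvexOn ℝ (Set.Ici 0) Φ)
    (hΦderiv : ∀ v ∈ Set.Ici (0:ℝ), HasDerivAt Φ (Φ' v) v)
    (hΦ'nonneg : ∀ v ∈ Set.Ici (0:ℝ), 0 ≤ Φ' v)
    (hΦ'mono : MonotoneOn Φ' (Set.Ici 0))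
    (hΦnonneg : ∀ v ∈ Set.Ici (0:ℝ), 0 ≤ Φ v)
    -- feasible comparator
    (u : EuclideanSpace ℝ (Fin d))
    (hu : ∀ t ∈ Finset.Icc (m + 1) T, g t u ≤ 0) :
    Φ (V T) - Φ (V m)
      + ∑ t ∈ Finset.Icc (m + 1) T,
          (f t (fun i => x (t - m + (i : ℕ))) - f t (fun _ => u))
    ≤ ∑ t ∈ Finset.Icc (m + 1) T,
          ((f t (fun i => x (t - m + (i : ℕ))) + Φ' (V (t - 1)) * max (g t (x t)) 0)
            - (f t (fun _ => u) + Φ' (V (t - 1)) * max (g t u) 0))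
        + G * Φ' (V T) := by
  -- main inductive claim
  have main : ∀ n, m ≤ n → n ≤ T →
      0 ≤ V n ∧
      Φ (V n) - Φ (V m) ≤
        (∑ t ∈ Finset.Icc (m + 1) n, Φ' (V (t - 1)) * max (g t (x t)) 0)
          + G * (Φ' (V n) - Φ' (V m)) := by
    intro n hn
    induction n, hn using Nat.le_induction with
    | base =>
      intro _
      refine ⟨le_of_eq hVm.symm, ?_⟩
      simp [Finset.Icc_eq_empty_of_lt (Nat.lt_succ_self m)]
    | succ n hmn ih =>
      intro hle
      have hnT : n ≤ T := Nat.le_of_succ_le hle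
      obtain ⟨hVnn, hineq⟩ := ih hnT
      have hrec := hVrec (n + 1) (Nat.succ_le_succ hmn) hle
      simp only [Nat.add_sub_cancel] at hrec
      have hmem : n + 1 ∈ Finset.Icc (m + 1) T :=
        Finset.mem_Icc.2 ⟨Nat.succ_le_succ hmn, hle⟩
      have hginc : 0 ≤ max (g (n+1) (x (n+1))) 0 := le_max_right _ _
      have hgG : max (g (n+1) (x (n+1))) 0 ≤ G := hgbd (n+1) hmem (x (n+1))
      have hVsucc_nn : 0 ≤ V (n+1) := by rw [hrec]; positivity
      have hVle : V n ≤ V (n+1) := by rw [hrec]; linarith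
      have hstep := key_step Φ Φ' hΦderiv hΦ'mono G (V n) (V (n+1)) hVnn hVle
        (by rw [hrec]; linarith)
      refine ⟨hVsucc_nn, ?_⟩
      rw [Finset.sum_Icc_succ_top (Nat.succ_le_succ hmn)]
      simp only [Nat.add_sub_cancel]
      have hVdiff : V (n+1) - V n = max (g (n+1) (x (n+1))) 0 := by rw [hrec]; ring
      rw [← hVdiff]
      linarith
  obtain ⟨_, hmain⟩ := main T (Nat.le_of_succ_le hT) le_rfl
  have hΦ'Vm : 0 ≤ Φ' (V m) := hΦ'nonneg (V m) (by rw [hVm]; exact Set.self_mem_Ici)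
  -- rewrite RHS sum using g t u ≤ 0
  have hsum : ∀ t ∈ Finset.Icc (m + 1) T,
      ((f t (fun i => x (t - m + (i : ℕ))) + Φ' (V (t - 1)) * max (g t (x t)) 0)
        - (f t (fun _ => u) + Φ' (V (t - 1)) * max (g t u) 0))
      = (f t (fun i => x (t - m + (i : ℕ))) - f t (fun _ => u))
        + Φ' (V (t - 1)) * max (g t (x t)) 0 := by
    intro t ht
    rw [max_eq_right (hu t ht)]
    ring
  rw [Finset.sum_congr rfl hsum, Finset.sum_add_distrib]
  have hGmul : 0 ≤ G * Φ' (V m) := mul_nonneg hG hΦ'Vm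
  linarith
end
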